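/- arXiv:2503.01500 — 6 statements merged into one kernel-verified Lean document; each statement's English description precedes it below -/
import Mathlib

section
/- For all integers q and r with 1 ≤ q ≤ r ≤ 2q: every finite connected simple graph G with ind-match(G) = 1, min-match(G) = q and match(G) = r has at least 2r vertices, and there exists a finite connected simple graph G with ind-match(G) = 1, min-match(G) = q, match(G) = r and exactly 2r vertices. (That is, the minimum number of vertices of such graphs is 2r.) -/
variable {V : Type*}

/-- A matching of `G`: a set of edges of `G` that are pairwise disjoint. -/
def IsMatchingSet (G : SimpleGraph V) (M : Set (Sym2 V)) : Prop :=
  (∀ e ∈ M, e ∈ G.edgeSet) ∧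
    ∀ e ∈ M, ∀ f ∈ M, e ≠ f → ∀ v : V, v ∈ e → v ∉ f

/-- A maximal matching of `G`: a matching `M` such that `M ∪ {e}` is not a matching
for every edge `e` of `G` not in `M`. -/
def IsMaximalMatchingSet (G : SimpleGraph V) (M : Set (Sym2 V)) : Prop :=
  IsMatchingSet G M ∧
    ∀ e ∈ G.edgeSet, e ∉ M → ¬ IsMatchingSet G (insert e M)

/-- An induced matching of `G`: a matching `M` such that no edge of `G` meets
two distinct edges of `M`. -/
def IsInducedMatchingSet (G : SimpleGraph V) (M : Set (Sym2 V)) : Prop :=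
  IsMatchingSet G M ∧
    ∀ e ∈ M, ∀ f ∈ M, e ≠ f → ∀ g ∈ G.edgeSet,
      ¬ ((∃ v : V, v ∈ g ∧ v ∈ e) ∧ (∃ v : V, v ∈ g ∧ v ∈ f))

/-- The matching number of `G`: the maximum size of a matching. -/
noncomputable def matchNum (G : SimpleGraph V) : ℕ :=
  sSup {n | ∃ M : Set (Sym2 V), IsMatchingSet G M ∧ M.ncard = n}

/-- The minimum matching number of `G`: the minimum size of a maximal matching. -/
noncomputable def minMatchNum (G : SimpleGraph V) : ℕ :=
  sInf {n | ∃ M : Set (Sym2 V), IsMaximalMatchingSet G M ∧ M.ncard = n}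

/-- The induced matching number of `G`: the maximum size of an induced matching. -/
noncomputable def indMatchNum (G : SimpleGraph V) : ℕ :=
  sSup {n | ∃ M : Set (Sym2 V), IsInducedMatchingSet G M ∧ M.ncard = n}

/- ## auxiliary lemmas -/

lemma aux_ncard_le_one_of_subsingleton {α : Type*} {s : Set α} (h : s.Subsingleton) :
    s.ncard ≤ 1 := by
  rcases s.eq_empty_or_nonempty with rfl | ⟨a, ha⟩
  · simp
  · have hs : s ⊆ {a} := fun x hx => h hx ha
    calc s.ncard ≤ ({a} : Set α).ncard := Set.ncard_le_ncard hs (Set.finite_singleton a)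
      _ = 1 := Set.ncard_singleton a

lemma aux_edge_support {G : SimpleGraph V} {e : Sym2 V} (he : e ∈ G.edgeSet) :
    ∃ a b : V, a ≠ b ∧ {v : V | v ∈ e} = {a, b} := by
  induction e with
  | _ a b =>
    refine ⟨a, b, G.ne_of_adj he, ?_⟩
    ext v; simp [Sym2.mem_iff]

def msupport (M : Set (Sym2 V)) : Set V := {v | ∃ e ∈ M, v ∈ e}

lemma aux_msupport_ncard [Finite V] (G : SimpleGraph V) (M : Set (Sym2 V))
    (hM : IsMatchingSet G M) : (msupport M).ncard = 2 * M.ncard := by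
  have hfin : M.Finite := Set.toFinite M
  revert hM
  refine Set.Finite.induction_on
    (motive := fun M _ => IsMatchingSet G M → (msupport M).ncard = 2 * M.ncard) M hfin ?_ ?_
  · intro _; simp [msupport]
  · intro e M' heM' hM'fin IH hM
    have hM' : IsMatchingSet G M' := by
      refine ⟨fun f hf => hM.1 f (Set.mem_insert_of_mem _ hf),
        fun f hf g hg => hM.2 f (Set.mem_insert_of_mem _ hf) g (Set.mem_insert_of_mem _ hg)⟩
    have he : e ∈ G.edgeSet := hM.1 e (Set.mem_insert _ _)
    obtain ⟨a, b, hab, hset⟩ := aux_edge_support he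
    have hsupp : msupport (insert e M') = {v : V | v ∈ e} ∪ msupport M' := by
      ext v
      simp only [msupport, Set.mem_setOf_eq, Set.mem_union, Set.mem_insert_iff]
      constructor
      · rintro ⟨f, (rfl | hf), hv⟩
        · exact Or.inl hv
        · exact Or.inr ⟨f, hf, hv⟩
      · rintro (hv | ⟨f, hf, hv⟩)
        · exact ⟨e, Or.inl rfl, hv⟩
        · exact ⟨f, Or.inr hf, hv⟩
    have hdisj : Disjoint {v : V | v ∈ e} (msupport M') := by
      rw [Set.disjoint_left]
      rintro v hv ⟨f, hf, hvf⟩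
      have hef : e ≠ f := fun h => heM' (h ▸ hf)
      exact hM.2 e (Set.mem_insert _ _) f (Set.mem_insert_of_mem _ hf) hef v hv hvf
    rw [hsupp, Set.ncard_union_eq hdisj (Set.toFinite _) (Set.toFinite _),
      Set.ncard_insert_of_notMem heM' hM'fin, IH hM', hset, Set.ncard_pair hab]
    ring

lemma aux_matching_card_le [Fintype V] (G : SimpleGraph V) (M : Set (Sym2 V))
    (hM : IsMatchingSet G M) : 2 * M.ncard ≤ Fintype.card V := by
  rw [← aux_msupport_ncard G M hM]
  calc (msupport M).ncard ≤ (Set.univ : Set V).ncard :=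
        Set.ncard_le_ncard (Set.subset_univ _) Set.finite_univ
    _ = Fintype.card V := by rw [Set.ncard_univ, Nat.card_eq_fintype_card]

lemma aux_ncard_le_card [Finite V] (M : Set (Sym2 V)) : M.ncard ≤ Nat.card (Sym2 V) :=
  calc M.ncard ≤ (Set.univ : Set (Sym2 V)).ncard :=
        Set.ncard_le_ncard (Set.subset_univ _) Set.finite_univ
    _ = Nat.card (Sym2 V) := Set.ncard_univ _

lemma aux_matching_bddAbove [Finite V] (G : SimpleGraph V) :
    BddAbove {n | ∃ M : Set (Sym2 V), IsMatchingSet G M ∧ M.ncard = n} := by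
  refine ⟨Nat.card (Sym2 V), ?_⟩
  rintro n ⟨M, _, rfl⟩
  exact aux_ncard_le_card M

lemma aux_indmatching_bddAbove [Finite V] (G : SimpleGraph V) :
    BddAbove {n | ∃ M : Set (Sym2 V), IsInducedMatchingSet G M ∧ M.ncard = n} := by
  refine ⟨Nat.card (Sym2 V), ?_⟩
  rintro n ⟨M, _, rfl⟩
  exact aux_ncard_le_card M

/-- Part 1: the lower bound. -/
lemma aux_part1 (r : ℕ) (V : Type) [Fintype V] (G : SimpleGraph V)
    (hm : matchNum G = r) : 2 * r ≤ Fintype.card V := by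
  have hne : {n | ∃ M : Set (Sym2 V), IsMatchingSet G M ∧ M.ncard = n}.Nonempty := by
    refine ⟨0, ∅, ⟨?_, ?_⟩, by simp⟩ <;> simp
  have hmem := Nat.sSup_mem hne (aux_matching_bddAbove G)
  rw [show sSup {n | ∃ M : Set (Sym2 V), IsMatchingSet G M ∧ M.ncard = n} = matchNum G from rfl,
    hm] at hmem
  obtain ⟨M, hM, hMcard⟩ := hmem
  calc 2 * r = 2 * M.ncard := by rw [hMcard]
    _ ≤ Fintype.card V := aux_matching_card_le G M hM

/- ## The example graph -/

def exG (q r : ℕ) : SimpleGraph (Fin (2 * r)) where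
  Adj u v := u ≠ v ∧ ((u.val < 2*q ∧ v.val < 2*q) ∨
    (2*q ≤ u.val ∧ v.val = u.val - 2*q) ∨ (2*q ≤ v.val ∧ u.val = v.val - 2*q))
  symm := by
    constructor
    rintro u v ⟨h1, h2⟩
    exact ⟨h1.symm, by tauto⟩
  loopless := by constructor; rintro u ⟨h, -⟩; exact h rfl

lemma exG_adj (q r : ℕ) (a b : Fin (2*r)) : (exG q r).Adj a b ↔ (a ≠ b ∧ ((a.val < 2*q ∧ b.val < 2*q) ∨
    (2*q ≤ a.val ∧ b.val = a.val - 2*q) ∨ (2*q ≤ b.val ∧ a.val = b.val - 2*q))) := Iff.rfl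

/-- every edge of `exG q r` has an endpoint in the core when `r ≤ 2q`. -/
lemma exG_core_endpoint {q r : ℕ} (hr2q : r ≤ 2*q) {e : Sym2 (Fin (2*r))}
    (he : e ∈ (exG q r).edgeSet) : ∃ u : Fin (2*r), u ∈ e ∧ u.val < 2*q := by
  induction e with
  | _ a b =>
    rw [SimpleGraph.mem_edgeSet, exG_adj] at he
    have ha := a.2
    have hb := b.2
    rcases he.2 with ⟨h1, h2⟩ | ⟨h1, h2⟩ | ⟨h1, h2⟩
    · exact ⟨a, Sym2.mem_mk_left _ _, h1⟩
    · exact ⟨b, Sym2.mem_mk_right _ _, by omega⟩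
    · exact ⟨a, Sym2.mem_mk_left _ _, by omega⟩


/- ### the maximum matching -/

def fEdge {q r : ℕ} (hq : 1 ≤ q) (hqr : q ≤ r) (i : Fin r) : Sym2 (Fin (2*r)) :=
  if h : i.val < 2*(r - q) then
    s(⟨i.val, by omega⟩, ⟨i.val + 2*q, by have := i.2; omega⟩)
  else
    s(⟨2*i.val - 2*(r-q), by have := i.2; omega⟩, ⟨2*i.val - 2*(r-q) + 1, by have := i.2; omega⟩)

lemma mem_fEdge {q r : ℕ} (hq : 1 ≤ q) (hqr : q ≤ r) {i : Fin r} {v : Fin (2*r)}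
    (hv : v ∈ fEdge hq hqr i) :
    (i.val < 2*(r-q) ∧ (v.val = i.val ∨ v.val = i.val + 2*q)) ∨
    (2*(r-q) ≤ i.val ∧ (v.val = 2*i.val - 2*(r-q) ∨ v.val = 2*i.val - 2*(r-q) + 1)) := by
  rw [fEdge] at hv
  split_ifs at hv with h
  · rw [Sym2.mem_iff] at hv
    rcases hv with rfl | rfl
    · exact Or.inl ⟨h, Or.inl rfl⟩
    · exact Or.inl ⟨h, Or.inr rfl⟩
  · rw [Sym2.mem_iff] at hv
    rcases hv with rfl | rfl
    · exact Or.inr ⟨by omega, Or.inl rfl⟩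
    · exact Or.inr ⟨by omega, Or.inr rfl⟩

lemma fEdge_key {q r : ℕ} (hq : 1 ≤ q) (hqr : q ≤ r) (hr2q : r ≤ 2*q) {i j : Fin r} {v : Fin (2*r)}
    (hvi : v ∈ fEdge hq hqr i) (hvj : v ∈ fEdge hq hqr j) : i = j := by
  have h1 := mem_fEdge hq hqr hvi
  have h2 := mem_fEdge hq hqr hvj
  have hi := i.2
  have hj := j.2
  apply Fin.ext
  rcases h1 with ⟨h1a, h1b | h1b⟩ | ⟨h1a, h1b | h1b⟩ <;>
    rcases h2 with ⟨h2a, h2b | h2b⟩ | ⟨h2a, h2b | h2b⟩ <;> omega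

lemma fEdge_mem_edgeSet {q r : ℕ} (hq : 1 ≤ q) (hqr : q ≤ r) (hr2q : r ≤ 2*q) (i : Fin r) :
    fEdge hq hqr i ∈ (exG q r).edgeSet := by
  rw [fEdge]
  have hi := i.2
  split_ifs with h
  · rw [SimpleGraph.mem_edgeSet, exG_adj]
    constructor
    · intro hcon
      have : i.val = i.val + 2*q := congrArg Fin.val hcon
      omega
    · right; right
      exact ⟨by simp, by simp⟩
  · rw [SimpleGraph.mem_edgeSet, exG_adj]
    constructor
    · intro hcon
      have : 2*i.val - 2*(r-q) = 2*i.val - 2*(r-q) + 1 := congrArg Fin.val hcon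
      omega
    · left
      refine ⟨by simp; omega, by simp; omega⟩

def Mmax {q r : ℕ} (hq : 1 ≤ q) (hqr : q ≤ r) : Set (Sym2 (Fin (2*r))) :=
  Set.range (fEdge hq hqr)

lemma Mmax_isMatching {q r : ℕ} (hq : 1 ≤ q) (hqr : q ≤ r) (hr2q : r ≤ 2*q) :
    IsMatchingSet (exG q r) (Mmax hq hqr) := by
  constructor
  · rintro e ⟨i, rfl⟩
    exact fEdge_mem_edgeSet hq hqr hr2q i
  · rintro e ⟨i, rfl⟩ f ⟨j, rfl⟩ hef v hvi hvj
    exact hef (by rw [fEdge_key hq hqr hr2q hvi hvj])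

lemma fEdge_injective {q r : ℕ} (hq : 1 ≤ q) (hqr : q ≤ r) (hr2q : r ≤ 2*q) :
    Function.Injective (fEdge hq hqr) := by
  intro i j hij
  have hv : (⟨if i.val < 2*(r-q) then i.val else 2*i.val - 2*(r-q),
      by have := i.2; split_ifs <;> omega⟩ : Fin (2*r)) ∈ fEdge hq hqr i := by
    rw [fEdge]
    split_ifs with h
    · simp
    · simp
  exact fEdge_key hq hqr hr2q hv (hij ▸ hv)

lemma Mmax_ncard {q r : ℕ} (hq : 1 ≤ q) (hqr : q ≤ r) (hr2q : r ≤ 2*q) :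
    (Mmax hq hqr).ncard = r := by
  rw [Mmax, ← Set.image_univ, Set.ncard_image_of_injective _ (fEdge_injective hq hqr hr2q),
    Set.ncard_univ]
  simp

lemma exG_matchNum {q r : ℕ} (hq : 1 ≤ q) (hqr : q ≤ r) (hr2q : r ≤ 2*q) :
    matchNum (exG q r) = r := by
  have hmem : r ∈ {n | ∃ M : Set (Sym2 (Fin (2*r))), IsMatchingSet (exG q r) M ∧ M.ncard = n} :=
    ⟨Mmax hq hqr, Mmax_isMatching hq hqr hr2q, Mmax_ncard hq hqr hr2q⟩
  apply le_antisymm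
  · apply csSup_le ⟨r, hmem⟩
    rintro n ⟨M, hM, rfl⟩
    have := aux_matching_card_le (exG q r) M hM
    simp [Fintype.card_fin] at this
    omega
  · exact le_csSup (aux_matching_bddAbove _) hmem

/- ### the minimum maximal matching -/

def gEdge {q r : ℕ} (hq : 1 ≤ q) (hqr : q ≤ r) (i : Fin q) : Sym2 (Fin (2*r)) :=
  s(⟨2*i.val, by have := i.2; omega⟩, ⟨2*i.val + 1, by have := i.2; omega⟩)

lemma mem_gEdge {q r : ℕ} (hq : 1 ≤ q) (hqr : q ≤ r) {i : Fin q} {v : Fin (2*r)}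
    (hv : v ∈ gEdge hq hqr i) : v.val = 2*i.val ∨ v.val = 2*i.val + 1 := by
  rw [gEdge, Sym2.mem_iff] at hv
  rcases hv with rfl | rfl
  · exact Or.inl rfl
  · exact Or.inr rfl

lemma gEdge_key {q r : ℕ} (hq : 1 ≤ q) (hqr : q ≤ r) {i j : Fin q} {v : Fin (2*r)}
    (hvi : v ∈ gEdge hq hqr i) (hvj : v ∈ gEdge hq hqr j) : i = j := by
  have h1 := mem_gEdge hq hqr hvi
  have h2 := mem_gEdge hq hqr hvj
  apply Fin.ext
  rcases h1 with h1 | h1 <;> rcases h2 with h2 | h2 <;> omega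

lemma gEdge_mem_edgeSet {q r : ℕ} (hq : 1 ≤ q) (hqr : q ≤ r) (i : Fin q) :
    gEdge hq hqr i ∈ (exG q r).edgeSet := by
  have hi := i.2
  rw [gEdge, SimpleGraph.mem_edgeSet, exG_adj]
  constructor
  · intro hcon
    have : 2*i.val = 2*i.val + 1 := congrArg Fin.val hcon
    omega
  · left
    exact ⟨by show 2*i.val < 2*q; omega, by show 2*i.val + 1 < 2*q; omega⟩

lemma gEdge_cover {q r : ℕ} (hq : 1 ≤ q) (hqr : q ≤ r) (v : Fin (2*r)) (hv : v.val < 2*q) :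
    ∃ i : Fin q, v ∈ gEdge hq hqr i := by
  refine ⟨⟨v.val / 2, by omega⟩, ?_⟩
  rw [gEdge, Sym2.mem_iff]
  have h2 : v.val = 2*(v.val/2) ∨ v.val = 2*(v.val/2) + 1 := by omega
  rcases h2 with h2 | h2
  · left; apply Fin.ext; exact h2
  · right; apply Fin.ext; exact h2

def Mmin {q r : ℕ} (hq : 1 ≤ q) (hqr : q ≤ r) : Set (Sym2 (Fin (2*r))) :=
  Set.range (gEdge hq hqr)

lemma gEdge_injective {q r : ℕ} (hq : 1 ≤ q) (hqr : q ≤ r) :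
    Function.Injective (gEdge (r := r) hq hqr) := by
  intro i j hij
  have hv : (⟨2*i.val, by have := i.2; omega⟩ : Fin (2*r)) ∈ gEdge hq hqr i := by
    rw [gEdge]; simp
  exact gEdge_key hq hqr hv (hij ▸ hv)

lemma Mmin_ncard {q r : ℕ} (hq : 1 ≤ q) (hqr : q ≤ r) : (Mmin hq hqr).ncard = q := by
  rw [Mmin, ← Set.image_univ, Set.ncard_image_of_injective _ (gEdge_injective hq hqr),
    Set.ncard_univ]
  simp

lemma Mmin_isMaximal {q r : ℕ} (hq : 1 ≤ q) (hqr : q ≤ r) (hr2q : r ≤ 2*q) :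
    IsMaximalMatchingSet (exG q r) (Mmin hq hqr) := by
  have hmatch : IsMatchingSet (exG q r) (Mmin hq hqr) := by
    constructor
    · rintro e ⟨i, rfl⟩
      exact gEdge_mem_edgeSet hq hqr i
    · rintro e ⟨i, rfl⟩ f ⟨j, rfl⟩ hef v hvi hvj
      exact hef (by rw [gEdge_key hq hqr hvi hvj])
  refine ⟨hmatch, ?_⟩
  intro e he heM hcon
  obtain ⟨u, hue, huq⟩ := exG_core_endpoint hr2q he
  obtain ⟨i, hui⟩ := gEdge_cover hq hqr u huq
  have hne : e ≠ gEdge hq hqr i := by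
    rintro rfl
    exact heM ⟨i, rfl⟩
  exact hcon.2 e (Set.mem_insert _ _) (gEdge hq hqr i)
    (Set.mem_insert_of_mem _ ⟨i, rfl⟩) hne u hue hui

lemma exG_maximal_ge {q r : ℕ} (hq : 1 ≤ q) (hqr : q ≤ r) (M : Set (Sym2 (Fin (2*r))))
    (hM : IsMaximalMatchingSet (exG q r) M) : q ≤ M.ncard := by
  classical
  set U : Set (Fin (2*r)) := {v | v.val < 2*q ∧ ∀ e ∈ M, v ∉ e} with hU
  have hUsub : U.Subsingleton := by
    intro u hu v hv
    by_contra huv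
    have hadj : (exG q r).Adj u v := by
      rw [exG_adj]
      exact ⟨huv, Or.inl ⟨hu.1, hv.1⟩⟩
    have he : s(u, v) ∈ (exG q r).edgeSet := hadj
    have heM : s(u, v) ∉ M := by
      intro h
      exact hu.2 _ h (Sym2.mem_mk_left _ _)
    apply hM.2 _ he heM
    constructor
    · rintro f (rfl | hf)
      · exact he
      · exact hM.1.1 f hf
    · rintro f1 hf1 f2 hf2 hne w hw1 hw2
      rcases hf1 with rfl | hf1 <;> rcases hf2 with rfl | hf2
      · exact hne rfl
      · rw [Sym2.mem_iff] at hw1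
        rcases hw1 with rfl | rfl
        · exact hu.2 _ hf2 hw2
        · exact hv.2 _ hf2 hw2
      · rw [Sym2.mem_iff] at hw2
        rcases hw2 with rfl | rfl
        · exact hu.2 _ hf1 hw1
        · exact hv.2 _ hf1 hw1
      · exact hM.1.2 f1 hf1 f2 hf2 hne w hw1 hw2
  have hUcard : U.ncard ≤ 1 := aux_ncard_le_one_of_subsingleton hUsub
  -- the core
  set C : Set (Fin (2*r)) := {v | v.val < 2*q} with hC
  have hCcard : C.ncard = 2*q := by
    have himg : C = (fun i : Fin (2*q) =>
        (⟨i.val, by have := i.2; omega⟩ : Fin (2*r))) '' Set.univ := by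
      ext v
      simp only [hC, Set.mem_setOf_eq, Set.mem_image, Set.mem_univ, true_and]
      constructor
      · intro hv
        exact ⟨⟨v.val, hv⟩, rfl⟩
      · rintro ⟨i, rfl⟩
        exact i.2
    rw [himg, Set.ncard_image_of_injective _ ?_, Set.ncard_univ]
    · simp
    · intro i j hij
      have := congrArg Fin.val hij
      exact Fin.ext this
  have hCsub : C ⊆ U ∪ msupport M := by
    intro v hv
    by_cases hcov : ∃ e ∈ M, v ∈ e
    · exact Or.inr hcov
    · push_neg at hcov
      exact Or.inl ⟨hv, hcov⟩
  have hsupp : (msupport M).ncard = 2 * M.ncard := aux_msupport_ncard _ M hM.1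
  have hle : C.ncard ≤ U.ncard + (msupport M).ncard :=
    le_trans (Set.ncard_le_ncard hCsub (Set.Finite.union (Set.toFinite U) (Set.toFinite _)))
      (Set.ncard_union_le _ _)
  omega

lemma exG_minMatchNum {q r : ℕ} (hq : 1 ≤ q) (hqr : q ≤ r) (hr2q : r ≤ 2*q) :
    minMatchNum (exG q r) = q := by
  have hmem : q ∈ {n | ∃ M : Set (Sym2 (Fin (2*r))),
      IsMaximalMatchingSet (exG q r) M ∧ M.ncard = n} :=
    ⟨Mmin hq hqr, Mmin_isMaximal hq hqr hr2q, Mmin_ncard hq hqr⟩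
  apply le_antisymm
  · exact Nat.sInf_le hmem
  · apply le_csInf ⟨q, hmem⟩
    rintro n ⟨M, hM, rfl⟩
    exact exG_maximal_ge hq hqr M hM

/- ### the induced matching number -/

lemma exG_indMatchNum {q r : ℕ} (hq : 1 ≤ q) (hqr : q ≤ r) (hr2q : r ≤ 2*q) :
    indMatchNum (exG q r) = 1 := by
  have h2r : 2 ≤ 2*r := by omega
  set e0 : Sym2 (Fin (2*r)) := s(⟨0, by omega⟩, ⟨1, by omega⟩) with he0
  have he0edge : e0 ∈ (exG q r).edgeSet := by
    rw [he0, SimpleGraph.mem_edgeSet, exG_adj]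
    constructor
    · intro hcon
      have : (0 : ℕ) = 1 := congrArg Fin.val hcon
      omega
    · left
      exact ⟨by simp; omega, by simp; omega⟩
  have hmem : 1 ∈ {n | ∃ M : Set (Sym2 (Fin (2*r))),
      IsInducedMatchingSet (exG q r) M ∧ M.ncard = n} := by
    refine ⟨{e0}, ⟨⟨?_, ?_⟩, ?_⟩, Set.ncard_singleton _⟩
    · rintro e rfl; exact he0edge
    · rintro e rfl f rfl hne; exact absurd rfl hne
    · rintro e rfl f rfl hne; exact absurd rfl hne
  apply le_antisymm
  · apply csSup_le ⟨1, hmem⟩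
    rintro n ⟨M, hM, rfl⟩
    apply aux_ncard_le_one_of_subsingleton
    intro e he f hf
    by_contra hef
    obtain ⟨u, hue, huq⟩ := exG_core_endpoint hr2q (hM.1.1 e he)
    obtain ⟨v, hvf, hvq⟩ := exG_core_endpoint hr2q (hM.1.1 f hf)
    have huv : u ≠ v := by
      rintro rfl
      exact hM.1.2 e he f hf hef u hue hvf
    have hg : s(u, v) ∈ (exG q r).edgeSet := by
      rw [SimpleGraph.mem_edgeSet, exG_adj]
      exact ⟨huv, Or.inl ⟨huq, hvq⟩⟩
    exact hM.2 e he f hf hef _ hg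
      ⟨⟨u, Sym2.mem_mk_left _ _, hue⟩, ⟨v, Sym2.mem_mk_right _ _, hvf⟩⟩
  · exact le_csSup (aux_indmatching_bddAbove _) hmem

/- ### connectivity -/

lemma exG_connected {q r : ℕ} (hq : 1 ≤ q) (hqr : q ≤ r) (hr2q : r ≤ 2*q) :
    (exG q r).Connected := by
  have h2r : 0 < 2*r := by omega
  set z : Fin (2*r) := ⟨0, h2r⟩ with hz
  have hreach : ∀ v : Fin (2*r), (exG q r).Reachable v z := by
    intro v
    have hcore : ∀ w : Fin (2*r), w.val < 2*q → (exG q r).Reachable w z := by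
      intro w hw
      by_cases hwz : w = z
      · rw [hwz]
      · refine SimpleGraph.Adj.reachable ?_
        rw [exG_adj]
        refine ⟨hwz, Or.inl ⟨hw, by simp [hz]; omega⟩⟩
    by_cases hv : v.val < 2*q
    · exact hcore v hv
    · push_neg at hv
      have hvlt := v.2
      set w : Fin (2*r) := ⟨v.val - 2*q, by omega⟩ with hw
      have hadj : (exG q r).Adj v w := by
        rw [exG_adj]
        refine ⟨?_, Or.inr (Or.inl ⟨hv, by simp [hw]⟩)⟩
        intro hcon
        have : v.val = v.val - 2*q := congrArg Fin.val hcon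
        omega
      exact hadj.reachable.trans (hcore w (by simp [hw]; omega))
  rw [SimpleGraph.connected_iff]
  refine ⟨fun u v => (hreach u).trans (hreach v).symm, ⟨z⟩⟩


theorem stmt_0 (q r : ℕ) (hq : 1 ≤ q) (hqr : q ≤ r) (hr2q : r ≤ 2 * q) :
    (∀ (V : Type) [Fintype V] (G : SimpleGraph V), G.Connected →
      indMatchNum G = 1 → minMatchNum G = q → matchNum G = r →
      2 * r ≤ Fintype.card V) ∧
    (∃ G : SimpleGraph (Fin (2 * r)), G.Connected ∧
      indMatchNum G = 1 ∧ minMatchNum G = q ∧ matchNum G = r) := by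
  constructor
  · intro V _ G _ _ _ hm
    exact aux_part1 r V G hm
  · exact ⟨exG q r, exG_connected hq hqr hr2q, exG_indMatchNum hq hqr hr2q,
      exG_minMatchNum hq hqr hr2q, exG_matchNum hq hqr hr2q⟩
end

section
/- For all integers p, q and r with 2 ≤ p ≤ q < r ≤ 2q: every finite connected simple graph G with ind-match(G) = p, min-match(G) = q and match(G) = r has at least 2r vertices, and there exists a finite connected simple graph G with ind-match(G) = p, min-match(G) = q, match(G) = r and exactly 2r vertices. (That is, the minimum number of vertices of such graphs is 2r.) -/
variable {V : Type*}

namespace MatchAux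

noncomputable def efin [DecidableEq V] (e : Sym2 V) : Finset V :=
  Sym2.lift ⟨fun a b => {a, b}, fun a b => Finset.pair_comm a b⟩ e

@[simp] lemma mem_efin [DecidableEq V] {v : V} {e : Sym2 V} : v ∈ efin e ↔ v ∈ e := by
  induction e using Sym2.ind with
  | _ a b => simp [efin, Sym2.mem_iff]

lemma efin_card_le [DecidableEq V] (e : Sym2 V) : (efin e).card ≤ 2 := by
  induction e using Sym2.ind with
  | _ a b =>
    show ({a, b} : Finset V).card ≤ 2
    exact (Finset.card_insert_le _ _).trans (by simp)

lemma efin_card [DecidableEq V] {e : Sym2 V} (he : ¬ e.IsDiag) : (efin e).card = 2 := by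
  induction e using Sym2.ind with
  | _ a b =>
    have hab : a ≠ b := by simpa using he
    show ({a, b} : Finset V).card = 2
    rw [Finset.card_insert_of_notMem (by simpa using hab), Finset.card_singleton]

/-- Key counting lemma: a matching of size `n` needs `2n` vertices. -/
lemma two_mul_ncard_le [Fintype V] {G : SimpleGraph V} {M : Set (Sym2 V)}
    (hM : IsMatchingSet G M) : 2 * M.ncard ≤ Fintype.card V := by
  classical
  have hfin : M.Finite := Set.toFinite M
  set F := hfin.toFinset with hF
  have hmem : ∀ e ∈ F, e ∈ M := fun e he => hfin.mem_toFinset.mp he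
  have hdisj : ∀ e ∈ F, ∀ f ∈ F, e ≠ f → Disjoint (efin e) (efin f) := by
    intro e he f hf hef
    rw [Finset.disjoint_left]
    intro v hv hv'
    exact hM.2 e (hmem e he) f (hmem f hf) hef v (mem_efin.mp hv) (mem_efin.mp hv')
  have h1 : (F.biUnion efin).card = ∑ e ∈ F, (efin e).card := Finset.card_biUnion hdisj
  have h2 : ∑ e ∈ F, (efin e).card = 2 * F.card := by
    rw [Finset.sum_congr rfl (fun e he => efin_card
      (SimpleGraph.not_isDiag_of_mem_edgeSet G (hM.1 e (hmem e he))))]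
    simp [mul_comm]
  have h3 : (F.biUnion efin).card ≤ Fintype.card V := Finset.card_le_univ _
  rw [Set.ncard_eq_toFinset_card M hfin, ← h2, ← h1]
  exact h3

lemma empty_isMatchingSet (G : SimpleGraph V) : IsMatchingSet G (∅ : Set (Sym2 V)) :=
  ⟨fun e he => absurd he (Set.notMem_empty e), fun e he => absurd he (Set.notMem_empty e)⟩

lemma matchSet_nonempty [Fintype V] (G : SimpleGraph V) :
    {n | ∃ M : Set (Sym2 V), IsMatchingSet G M ∧ M.ncard = n}.Nonempty :=
  ⟨0, ∅, empty_isMatchingSet G, Set.ncard_empty _⟩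

lemma matchSet_bddAbove [Fintype V] (G : SimpleGraph V) :
    BddAbove {n | ∃ M : Set (Sym2 V), IsMatchingSet G M ∧ M.ncard = n} := by
  refine ⟨Fintype.card V, ?_⟩
  rintro n ⟨M, hM, rfl⟩
  have := two_mul_ncard_le hM
  omega

lemma exists_matching_ncard_matchNum [Fintype V] (G : SimpleGraph V) :
    ∃ M : Set (Sym2 V), IsMatchingSet G M ∧ M.ncard = matchNum G :=
  Nat.sSup_mem (matchSet_nonempty G) (matchSet_bddAbove G)

lemma matchNum_eq [Fintype V] {G : SimpleGraph V} {r : ℕ}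
    (h1 : ∃ M : Set (Sym2 V), IsMatchingSet G M ∧ M.ncard = r)
    (h2 : ∀ M : Set (Sym2 V), IsMatchingSet G M → M.ncard ≤ r) : matchNum G = r :=
  IsGreatest.csSup_eq ⟨h1, by rintro n ⟨M, hM, rfl⟩; exact h2 M hM⟩

lemma indMatchNum_eq [Fintype V] {G : SimpleGraph V} {p : ℕ}
    (h1 : ∃ M : Set (Sym2 V), IsInducedMatchingSet G M ∧ M.ncard = p)
    (h2 : ∀ M : Set (Sym2 V), IsInducedMatchingSet G M → M.ncard ≤ p) : indMatchNum G = p :=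
  IsGreatest.csSup_eq ⟨h1, by rintro n ⟨M, hM, rfl⟩; exact h2 M hM⟩

lemma minMatchNum_eq {G : SimpleGraph V} {q : ℕ}
    (h1 : ∃ M : Set (Sym2 V), IsMaximalMatchingSet G M ∧ M.ncard = q)
    (h2 : ∀ M : Set (Sym2 V), IsMaximalMatchingSet G M → q ≤ M.ncard) : minMatchNum G = q :=
  IsLeast.csInf_eq ⟨h1, by rintro n ⟨M, hM, rfl⟩; exact h2 M hM⟩

end MatchAux

namespace MatchAux

section Iso

variable {W : Type*}

lemma symm_mem_of_mem_map (e : V ≃ W) {v : W} {x : Sym2 V} (h : v ∈ Sym2.map e x) :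
    e.symm v ∈ x := by
  rcases Sym2.mem_map.mp h with ⟨a, ha, rfl⟩
  simpa using ha

lemma map_symm_map (e : V ≃ W) (x : Sym2 V) : Sym2.map e.symm (Sym2.map e x) = x := by
  rw [Sym2.map_map]
  simp

lemma image_symm_image (e : V ≃ W) (X : Set (Sym2 V)) :
    Sym2.map e.symm '' (Sym2.map e '' X) = X := by
  rw [Set.image_image]
  simp [map_symm_map]

variable (e : V ≃ W) (G : SimpleGraph V) (H : SimpleGraph W)
  (hadj : ∀ a b, G.Adj a b ↔ H.Adj (e a) (e b))

include hadj

lemma map_mem_edgeSet {s : Sym2 V} (hs : s ∈ G.edgeSet) : Sym2.map e s ∈ H.edgeSet := by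
  induction s using Sym2.ind with
  | _ a b =>
    rw [Sym2.map_pair_eq, SimpleGraph.mem_edgeSet]
    exact (hadj a b).mp (SimpleGraph.mem_edgeSet G |>.mp hs)

lemma image_isMatchingSet {M : Set (Sym2 V)} (hM : IsMatchingSet G M) :
    IsMatchingSet H (Sym2.map e '' M) := by
  constructor
  · rintro _ ⟨x, hx, rfl⟩
    exact map_mem_edgeSet e G H hadj (hM.1 x hx)
  · rintro _ ⟨x, hx, rfl⟩ _ ⟨y, hy, rfl⟩ hxy v hv hv'
    have hxyne : x ≠ y := fun h => hxy (by rw [h])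
    exact hM.2 x hx y hy hxyne (e.symm v) (symm_mem_of_mem_map e hv)
      (symm_mem_of_mem_map e hv')

lemma image_isInducedMatchingSet {M : Set (Sym2 V)} (hM : IsInducedMatchingSet G M) :
    IsInducedMatchingSet H (Sym2.map e '' M) := by
  have hadj' : ∀ a b, H.Adj a b ↔ G.Adj (e.symm a) (e.symm b) := by
    intro a b
    rw [hadj (e.symm a) (e.symm b)]
    simp
  constructor
  · exact image_isMatchingSet e G H hadj hM.1
  · rintro _ ⟨x, hx, rfl⟩ _ ⟨y, hy, rfl⟩ hxy g hg ⟨⟨v, hv, hv'⟩, ⟨v₂, hv₂, hv₂'⟩⟩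
    have hxyne : x ≠ y := fun h => hxy (by rw [h])
    have hg' : Sym2.map e.symm g ∈ G.edgeSet :=
      map_mem_edgeSet e.symm H G (fun a b => hadj' a b) hg
    refine hM.2 x hx y hy hxyne (Sym2.map e.symm g) hg' ⟨⟨e.symm v, ?_, ?_⟩, ⟨e.symm v₂, ?_, ?_⟩⟩
    · exact Sym2.mem_map.mpr ⟨v, hv, rfl⟩
    · exact symm_mem_of_mem_map e hv'
    · exact Sym2.mem_map.mpr ⟨v₂, hv₂, rfl⟩
    · exact symm_mem_of_mem_map e hv₂'

lemma image_isMaximalMatchingSet {M : Set (Sym2 V)} (hM : IsMaximalMatchingSet G M) :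
    IsMaximalMatchingSet H (Sym2.map e '' M) := by
  have hadj' : ∀ a b, H.Adj a b ↔ G.Adj (e.symm a) (e.symm b) := by
    intro a b
    rw [hadj (e.symm a) (e.symm b)]
    simp
  constructor
  · exact image_isMatchingSet e G H hadj hM.1
  · intro s hs hsnot hins
    set s₀ := Sym2.map e.symm s with hs₀
    have hmap : Sym2.map e s₀ = s := by
      rw [hs₀, Sym2.map_map]; simp
    have hs₀G : s₀ ∈ G.edgeSet := map_mem_edgeSet e.symm H G (fun a b => hadj' a b) hs
    have hs₀M : s₀ ∉ M := fun hm => hsnot ⟨s₀, hm, hmap⟩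
    refine hM.2 s₀ hs₀G hs₀M ?_
    have himg : Sym2.map e '' (insert s₀ M) = insert s (Sym2.map e '' M) := by
      rw [Set.image_insert_eq, hmap]
    have : IsMatchingSet G (Sym2.map e.symm '' (Sym2.map e '' (insert s₀ M))) := by
      rw [himg]
      exact image_isMatchingSet e.symm H G (fun a b => hadj' a b) hins
    rwa [image_symm_image] at this

end Iso

lemma ncard_image {W : Type*} (e : V ≃ W) (M : Set (Sym2 V)) :
    (Sym2.map e '' M).ncard = M.ncard :=
  Set.ncard_image_of_injective M (Sym2.map.injective e.injective)

section IsoNum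

variable {W : Type*} (e : V ≃ W) (G : SimpleGraph V) (H : SimpleGraph W)
  (hadj : ∀ a b, G.Adj a b ↔ H.Adj (e a) (e b))

include hadj

lemma matchNum_iso : matchNum H = matchNum G := by
  have hadj' : ∀ a b, H.Adj a b ↔ G.Adj (e.symm a) (e.symm b) := by
    intro a b; rw [hadj (e.symm a) (e.symm b)]; simp
  unfold matchNum
  congr 1
  ext n
  constructor
  · rintro ⟨M, hM, rfl⟩
    exact ⟨Sym2.map e.symm '' M, image_isMatchingSet e.symm H G (fun a b => hadj' a b) hM,
      ncard_image e.symm M⟩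
  · rintro ⟨M, hM, rfl⟩
    exact ⟨Sym2.map e '' M, image_isMatchingSet e G H hadj hM, ncard_image e M⟩

lemma indMatchNum_iso : indMatchNum H = indMatchNum G := by
  have hadj' : ∀ a b, H.Adj a b ↔ G.Adj (e.symm a) (e.symm b) := by
    intro a b; rw [hadj (e.symm a) (e.symm b)]; simp
  unfold indMatchNum
  congr 1
  ext n
  constructor
  · rintro ⟨M, hM, rfl⟩
    exact ⟨Sym2.map e.symm '' M,
      image_isInducedMatchingSet e.symm H G (fun a b => hadj' a b) hM, ncard_image e.symm M⟩
  · rintro ⟨M, hM, rfl⟩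
    exact ⟨Sym2.map e '' M, image_isInducedMatchingSet e G H hadj hM, ncard_image e M⟩

lemma minMatchNum_iso : minMatchNum H = minMatchNum G := by
  have hadj' : ∀ a b, H.Adj a b ↔ G.Adj (e.symm a) (e.symm b) := by
    intro a b; rw [hadj (e.symm a) (e.symm b)]; simp
  unfold minMatchNum
  congr 1
  ext n
  constructor
  · rintro ⟨M, hM, rfl⟩
    exact ⟨Sym2.map e.symm '' M,
      image_isMaximalMatchingSet e.symm H G (fun a b => hadj' a b) hM, ncard_image e.symm M⟩
  · rintro ⟨M, hM, rfl⟩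
    exact ⟨Sym2.map e '' M, image_isMaximalMatchingSet e G H hadj hM, ncard_image e M⟩

lemma connected_iso (hG : G.Connected) : H.Connected :=
  hG.map ⟨e, fun {a b} h => (hadj a b).mp h⟩
    (fun w => ⟨e.symm w, e.apply_symm_apply w⟩)

end IsoNum

end MatchAux
namespace Constr

/-- Vertex type: clique `Fin (2u)`, whiskers `Fin (2t)`, tails `Fin a × Fin 4`,
gadgets `Fin b × Fin 2`. -/
abbrev CV (u t a b : ℕ) : Type :=
  (Fin (2*u) ⊕ Fin (2*t)) ⊕ ((Fin a × Fin 4) ⊕ (Fin b × Fin 2))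

variable {u t a b : ℕ}

abbrev cv (i : Fin (2*u)) : CV u t a b := Sum.inl (Sum.inl i)
abbrev wv (j : Fin (2*t)) : CV u t a b := Sum.inl (Sum.inr j)
abbrev tv (i : Fin a) (k : Fin 4) : CV u t a b := Sum.inr (Sum.inl (i, k))
abbrev gv (j : Fin b) (k : Fin 2) : CV u t a b := Sum.inr (Sum.inr (j, k))

def cadj : CV u t a b → CV u t a b → Prop
  | Sum.inl (Sum.inl i), Sum.inl (Sum.inl i') => i ≠ i'
  | Sum.inl (Sum.inl i), Sum.inl (Sum.inr j) => (i:ℕ) = (j:ℕ)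
  | Sum.inl (Sum.inr j), Sum.inl (Sum.inl i) => (i:ℕ) = (j:ℕ)
  | Sum.inl (Sum.inl i), Sum.inr (Sum.inl (_, k)) => (i:ℕ) = 0 ∧ (k:ℕ) = 0
  | Sum.inr (Sum.inl (_, k)), Sum.inl (Sum.inl i) => (i:ℕ) = 0 ∧ (k:ℕ) = 0
  | Sum.inl (Sum.inr j), Sum.inr (Sum.inr (_, k)) => (j:ℕ) = 0 ∧ (k:ℕ) = 0
  | Sum.inr (Sum.inr (_, k)), Sum.inl (Sum.inr j) => (j:ℕ) = 0 ∧ (k:ℕ) = 0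
  | Sum.inr (Sum.inl (i, k)), Sum.inr (Sum.inl (i', k')) =>
      i = i' ∧ ((k:ℕ) + 1 = (k':ℕ) ∨ (k':ℕ) + 1 = (k:ℕ))
  | Sum.inr (Sum.inr (j, k)), Sum.inr (Sum.inr (j', k')) => j = j' ∧ k ≠ k'
  | _, _ => False

def CG (u t a b : ℕ) : SimpleGraph (CV u t a b) where
  Adj := cadj
  symm := by
    constructor
    rintro ((i|j)|(⟨i,k⟩|⟨j,k⟩)) ((i'|j')|(⟨i',k'⟩|⟨j',k'⟩)) hadj <;>
      simp [cadj] at hadj ⊢ <;> tauto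
  loopless := by
    constructor
    rintro ((i|j)|(⟨i,k⟩|⟨j,k⟩)) hadj <;> simp [cadj] at hadj <;> omega

lemma cg_adj {x y : CV u t a b} : (CG u t a b).Adj x y ↔ cadj x y := Iff.rfl

@[simp] lemma fv40 : ((0 : Fin 4) : ℕ) = 0 := rfl
@[simp] lemma fv41 : ((1 : Fin 4) : ℕ) = 1 := rfl
@[simp] lemma fv42 : ((2 : Fin 4) : ℕ) = 2 := rfl
@[simp] lemma fv43 : ((3 : Fin 4) : ℕ) = 3 := rfl
@[simp] lemma fv20 : ((0 : Fin 2) : ℕ) = 0 := rfl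
@[simp] lemma fv21 : ((1 : Fin 2) : ℕ) = 1 := rfl

lemma card_CV : Fintype.card (CV u t a b) = 2*u + 2*t + 4*a + 2*b := by
  simp [CV]
  ring

lemma cg_connected (hu : 1 ≤ u) (ht : 1 ≤ t) (htu : t ≤ u) : (CG u t a b).Connected := by
  have c0 : Fin (2*u) := ⟨0, by omega⟩
  have hreach : ∀ x : CV u t a b, (CG u t a b).Reachable x (cv ⟨0, by omega⟩) := by
    have hc : ∀ i : Fin (2*u), (CG u t a b).Reachable (cv i) (cv ⟨0, by omega⟩) := by
      intro i
      by_cases hi : i = ⟨0, by omega⟩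
      · rw [hi]
      · exact SimpleGraph.Adj.reachable (by simpa [cg_adj, cadj] using hi)
    have hw : ∀ j : Fin (2*t), (CG u t a b).Reachable (wv j) (cv (⟨0, by omega⟩ : Fin (2*u))) := by
      intro j
      have hj : (j : ℕ) < 2*u := by have := j.2; omega
      exact (SimpleGraph.Adj.reachable
        (show (CG u t a b).Adj (wv j) (cv ⟨j, hj⟩) by simp [cg_adj, cadj])).trans (hc _)
    rintro ((i|j)|(⟨i,k⟩|⟨j,k⟩))
    · exact hc i
    · exact hw j
    · -- tail vertex: walk down to tv i 0, then to c0
      have h0 : (CG u t a b).Reachable (tv i (0 : Fin 4)) (cv ⟨0, by omega⟩) :=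
        SimpleGraph.Adj.reachable
          (show (CG u t a b).Adj (tv i (0 : Fin 4)) (cv ⟨0, by omega⟩) by simp [cg_adj, cadj])
      have step : ∀ m : ℕ, ∀ hm : m + 1 < 4,
          (CG u t a b).Adj (tv i ⟨m+1, hm⟩) (tv i ⟨m, by omega⟩) := by
        intro m hm
        simp [cg_adj, cadj]
      have : ∀ k : Fin 4, (CG u t a b).Reachable (tv i k) (cv ⟨0, by omega⟩) := by
        rintro ⟨m, hm⟩
        interval_cases m
        · exact h0
        · exact ((step 0 (by omega)).reachable).trans h0
        · exact ((step 1 (by omega)).reachable).trans (((step 0 (by omega)).reachable).trans h0)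
        · exact ((step 2 (by omega)).reachable).trans
            (((step 1 (by omega)).reachable).trans (((step 0 (by omega)).reachable).trans h0))
      exact this k
    · -- gadget vertex: to gv j 0, then w0, then c0
      have hw0 : (CG u t a b).Reachable (wv (⟨0, by omega⟩ : Fin (2*t))) (cv ⟨0, by omega⟩) :=
        hw _
      have h0 : (CG u t a b).Reachable (gv j (0 : Fin 2)) (cv ⟨0, by omega⟩) :=
        (SimpleGraph.Adj.reachable
          (show (CG u t a b).Adj (gv j 0) (wv ⟨0, by omega⟩) by simp [cg_adj, cadj])).trans hw0
      rcases k with ⟨m, hm⟩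
      interval_cases m
      · exact h0
      · exact (SimpleGraph.Adj.reachable
          (show (CG u t a b).Adj (gv j ⟨1, by omega⟩) (gv j ⟨0, by omega⟩) by
            simp [cg_adj, cadj, Fin.ext_iff])).trans h0
  have : Nonempty (CV u t a b) := ⟨cv ⟨0, by omega⟩⟩
  exact ⟨fun x y => (hreach x).trans (hreach y).symm⟩



/-- Classification of the edges of `CG`. -/
lemma edge_shapes {s : Sym2 (CV u t a b)} (hs : s ∈ (CG u t a b).edgeSet) :
    (∃ i i' : Fin (2*u), i ≠ i' ∧ s = s(cv i, cv i')) ∨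
    (∃ (i : Fin (2*u)) (j : Fin (2*t)), (i:ℕ) = (j:ℕ) ∧ s = s(cv i, wv j)) ∨
    (∃ (i : Fin (2*u)) (x : Fin a), (i:ℕ) = 0 ∧ s = s(cv i, tv x 0)) ∨
    (∃ (x : Fin a) (k k' : Fin 4), (k:ℕ) + 1 = (k':ℕ) ∧ s = s(tv x k, tv x k')) ∨
    (∃ (j : Fin (2*t)) (g : Fin b), (j:ℕ) = 0 ∧ s = s(wv j, gv g 0)) ∨
    (∃ g : Fin b, s = s(gv g 0, gv g 1)) := by
  induction s using Sym2.ind with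
  | _ x y =>
    have hadj : cadj x y := (SimpleGraph.mem_edgeSet _).mp hs
    rcases x with (i|j)|(⟨i,k⟩|⟨j,k⟩) <;> rcases y with (i'|j')|(⟨i',k'⟩|⟨j',k'⟩) <;>
        simp only [cadj] at hadj
    · exact Or.inl ⟨i, i', hadj, rfl⟩
    · exact Or.inr (Or.inl ⟨i, j', hadj, rfl⟩)
    · refine Or.inr (Or.inr (Or.inl ⟨i, i', hadj.1, ?_⟩))
      have hk : k' = 0 := Fin.ext (by simpa using hadj.2)
      rw [hk]
    · exact Or.inr (Or.inl ⟨i', j, hadj, Sym2.eq_swap⟩)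
    · refine Or.inr (Or.inr (Or.inr (Or.inr (Or.inl ⟨j, j', hadj.1, ?_⟩))))
      have hk : k' = 0 := Fin.ext (by simpa using hadj.2)
      rw [hk]
    · refine Or.inr (Or.inr (Or.inl ⟨i', i, hadj.1, ?_⟩))
      have hk : k = 0 := Fin.ext (by simpa using hadj.2)
      rw [hk, Sym2.eq_swap]
    · obtain ⟨rfl, hk⟩ := hadj
      rcases hk with hk | hk
      · exact Or.inr (Or.inr (Or.inr (Or.inl ⟨i, k, k', hk, rfl⟩)))
      · exact Or.inr (Or.inr (Or.inr (Or.inl ⟨i, k', k, hk, Sym2.eq_swap⟩)))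
    · refine Or.inr (Or.inr (Or.inr (Or.inr (Or.inl ⟨j', j, hadj.1, ?_⟩))))
      have hk : k = 0 := Fin.ext (by simpa using hadj.2)
      rw [hk, Sym2.eq_swap]
    · obtain ⟨rfl, hk⟩ := hadj
      refine Or.inr (Or.inr (Or.inr (Or.inr (Or.inr ⟨j, ?_⟩))))
      have hk0 : (k:ℕ) < 2 := k.2
      have hk0' : (k':ℕ) < 2 := k'.2
      have hne : (k:ℕ) ≠ (k':ℕ) := fun hh => hk (Fin.ext hh)
      have hk01 : (k:ℕ) = 0 ∨ (k:ℕ) = 1 := by omega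
      rcases hk01 with h0 | h1
      · have hv : k = 0 := Fin.ext (by simpa using h0)
        have h1' : k' = 1 := Fin.ext (by omega)
        rw [hv, h1']
      · have hv : k = 1 := Fin.ext (by simpa using h1)
        have h0' : k' = 0 := Fin.ext (by omega)
        rw [hv, h0', Sym2.eq_swap]

lemma sym2_exists_mem {X : Type*} (s : Sym2 X) : ∃ v, v ∈ s := by
  induction s using Sym2.ind with
  | _ x y => exact ⟨x, by simp⟩

/-- Index type for the maximum (perfect) matching. -/
abbrev IP (u t a b : ℕ) : Type := Fin (2*t) ⊕ (Fin (u-t) ⊕ (Fin a ⊕ (Fin a ⊕ Fin b)))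

def FP (u t a b : ℕ) (htu : t ≤ u) : IP u t a b → Sym2 (CV u t a b)
  | Sum.inl j => s(cv (Fin.castLE (by omega) j), wv j)
  | Sum.inr (Sum.inl i) =>
      s(cv ⟨2*t + 2*(i:ℕ), by have := i.2; omega⟩, cv ⟨2*t + 2*(i:ℕ) + 1, by have := i.2; omega⟩)
  | Sum.inr (Sum.inr (Sum.inl i)) => s(tv i 0, tv i 1)
  | Sum.inr (Sum.inr (Sum.inr (Sum.inl i))) => s(tv i 2, tv i 3)
  | Sum.inr (Sum.inr (Sum.inr (Sum.inr j))) => s(gv j 0, gv j 1)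

lemma FP_master (htu : t ≤ u) :
    ∀ x y (v : CV u t a b), v ∈ FP u t a b htu x → v ∈ FP u t a b htu y → x = y := by
  intro x y v hx hy
  rcases x with ⟨j,hj⟩|⟨⟨i,hi⟩|⟨⟨i,hi⟩|⟨⟨i,hi⟩|⟨j,hj⟩⟩⟩⟩ <;>
    rcases y with ⟨j',hj'⟩|⟨⟨i',hi'⟩|⟨⟨i',hi'⟩|⟨⟨i',hi'⟩|⟨j',hj'⟩⟩⟩⟩ <;>
    simp only [FP, Sym2.mem_iff] at hx hy <;>
    rcases hx with rfl | rfl <;>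
    simp_all [Fin.ext_iff] <;>
    omega

lemma FP_injective (htu : t ≤ u) : Function.Injective (FP u t a b htu) := by
  intro x y hxy
  obtain ⟨v, hv⟩ := sym2_exists_mem (FP u t a b htu x)
  exact FP_master htu x y v hv (hxy ▸ hv)

lemma FP_isMatching (htu : t ≤ u) :
    IsMatchingSet (CG u t a b) (Set.range (FP u t a b htu)) := by
  constructor
  · rintro _ ⟨x, rfl⟩
    rcases x with ⟨j,hj⟩|⟨⟨i,hi⟩|⟨⟨i,hi⟩|⟨⟨i,hi⟩|⟨j,hj⟩⟩⟩⟩ <;>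
      simp [FP, SimpleGraph.mem_edgeSet, cg_adj, cadj, Fin.ext_iff] <;> decide
  · rintro _ ⟨x, rfl⟩ _ ⟨y, rfl⟩ hxy v hvx hvy
    exact hxy (congrArg _ (FP_master htu x y v hvx hvy))

lemma FP_ncard (htu : t ≤ u) :
    (Set.range (FP u t a b htu)).ncard = u + t + 2*a + b := by
  rw [← Set.image_univ, Set.ncard_image_of_injective _ (FP_injective htu), Set.ncard_univ,
    Nat.card_eq_fintype_card]
  simp [IP]
  omega

lemma matchNum_CG (htu : t ≤ u) : matchNum (CG u t a b) = u + t + 2*a + b := by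
  apply MatchAux.matchNum_eq
  · exact ⟨Set.range (FP u t a b htu), FP_isMatching htu, FP_ncard htu⟩
  · intro M hM
    have := MatchAux.two_mul_ncard_le hM
    rw [card_CV] at this
    omega


lemma adj_of_two_mem {s : Sym2 (CV u t a b)} {x y : CV u t a b}
    (hs : s ∈ (CG u t a b).edgeSet) (hx : x ∈ s) (hy : y ∈ s) (hxy : x ≠ y) :
    (CG u t a b).Adj x y := by
  have : s = s(x, y) := (Sym2.mem_and_mem_iff hxy).mp ⟨hx, hy⟩
  rw [this] at hs
  exact (SimpleGraph.mem_edgeSet _).mp hs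

/-- Index type for the small maximal matching. -/
abbrev IQ (u a b : ℕ) : Type := Fin u ⊕ (Fin a ⊕ Fin b)

def FQ (u t a b : ℕ) : IQ u a b → Sym2 (CV u t a b)
  | Sum.inl i => s(cv ⟨2*(i:ℕ), by have := i.2; omega⟩, cv ⟨2*(i:ℕ) + 1, by have := i.2; omega⟩)
  | Sum.inr (Sum.inl i) => s(tv i 1, tv i 2)
  | Sum.inr (Sum.inr j) => s(gv j 0, gv j 1)

lemma FQ_master :
    ∀ x y (v : CV u t a b), v ∈ FQ u t a b x → v ∈ FQ u t a b y → x = y := by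
  intro x y v hx hy
  rcases x with ⟨i,hi⟩|⟨⟨i,hi⟩|⟨j,hj⟩⟩ <;>
    rcases y with ⟨i',hi'⟩|⟨⟨i',hi'⟩|⟨j',hj'⟩⟩ <;>
    simp only [FQ, Sym2.mem_iff] at hx hy <;>
    rcases hx with rfl | rfl <;>
    simp_all [Fin.ext_iff] <;>
    omega

lemma FQ_injective : Function.Injective (FQ u t a b) := by
  intro x y hxy
  obtain ⟨v, hv⟩ := sym2_exists_mem (FQ u t a b x)
  exact FQ_master x y v hv (hxy ▸ hv)

lemma FQ_isMatching : IsMatchingSet (CG u t a b) (Set.range (FQ u t a b)) := by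
  constructor
  · rintro _ ⟨x, rfl⟩
    rcases x with ⟨i,hi⟩|⟨⟨i,hi⟩|⟨j,hj⟩⟩ <;>
      simp [FQ, SimpleGraph.mem_edgeSet, cg_adj, cadj, Fin.ext_iff] <;> decide
  · rintro _ ⟨x, rfl⟩ _ ⟨y, rfl⟩ hxy v hvx hvy
    exact hxy (congrArg _ (FQ_master x y v hvx hvy))

lemma FQ_covers {s : Sym2 (CV u t a b)} (hs : s ∈ (CG u t a b).edgeSet) :
    ∃ z v, v ∈ s ∧ v ∈ FQ u t a b z := by
  rcases edge_shapes hs with ⟨i, i', hne, rfl⟩ | ⟨i, j, hij, rfl⟩ | ⟨i, x, hi0, rfl⟩ |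
    ⟨x, k, k', hkk, rfl⟩ | ⟨j, g, hj0, rfl⟩ | ⟨g, rfl⟩
  · exact ⟨Sum.inl ⟨(i:ℕ)/2, by have := i.2; omega⟩, cv i, by simp,
      by simp [FQ, Fin.ext_iff]; omega⟩
  · exact ⟨Sum.inl ⟨(i:ℕ)/2, by have := i.2; omega⟩, cv i, by simp,
      by simp [FQ, Fin.ext_iff]; omega⟩
  · exact ⟨Sum.inl ⟨(i:ℕ)/2, by have := i.2; omega⟩, cv i, by simp,
      by simp [FQ, Fin.ext_iff]; omega⟩
  · have hk' : (k':ℕ) < 4 := k'.2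
    have hcase : (k:ℕ) = 0 ∨ (k:ℕ) = 1 ∨ (k:ℕ) = 2 := by omega
    rcases hcase with h0 | h1 | h2
    · refine ⟨Sum.inr (Sum.inl x), tv x k', by simp, ?_⟩
      have : k' = 1 := Fin.ext (by simpa using by omega : (k':ℕ) = 1)
      rw [this]; simp [FQ]
    · refine ⟨Sum.inr (Sum.inl x), tv x k, by simp, ?_⟩
      have : k = 1 := Fin.ext (by simpa using h1)
      rw [this]; simp [FQ]
    · refine ⟨Sum.inr (Sum.inl x), tv x k, by simp, ?_⟩
      have : k = 2 := Fin.ext (by simpa using h2)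
      rw [this]; simp [FQ]
  · exact ⟨Sum.inr (Sum.inr g), gv g 0, by simp, by simp [FQ]⟩
  · exact ⟨Sum.inr (Sum.inr g), gv g 0, by simp, by simp [FQ]⟩

lemma FQ_isMaximal : IsMaximalMatchingSet (CG u t a b) (Set.range (FQ u t a b)) := by
  refine ⟨FQ_isMatching, ?_⟩
  intro s hs hsnot hins
  obtain ⟨z, v, hvs, hvz⟩ := FQ_covers hs
  have hne : s ≠ FQ u t a b z := fun hh => hsnot (hh ▸ ⟨z, rfl⟩)
  exact hins.2 s (Set.mem_insert _ _) (FQ u t a b z)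
    (Set.mem_insert_of_mem _ ⟨z, rfl⟩) hne v hvs hvz

lemma FQ_ncard : (Set.range (FQ u t a b)).ncard = u + a + b := by
  rw [← Set.image_univ, Set.ncard_image_of_injective _ FQ_injective, Set.ncard_univ,
    Nat.card_eq_fintype_card]
  simp [IQ]
  omega

/-- Covered vertex by a matching set. -/
def Cov (M : Set (Sym2 (CV u t a b))) (v : CV u t a b) : Prop := ∃ e ∈ M, v ∈ e

lemma uncovered_not_adj {M : Set (Sym2 (CV u t a b))}
    (hM : IsMaximalMatchingSet (CG u t a b) M) {x y : CV u t a b}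
    (hadj : (CG u t a b).Adj x y) (hx : ¬ Cov M x) (hy : ¬ Cov M y) : False := by
  have hxy : x ≠ y := fun hh => (CG u t a b).irrefl (v := x) (hh ▸ hadj)
  have hnot : s(x, y) ∉ M := fun hm => hx ⟨s(x,y), hm, by simp⟩
  refine hM.2 s(x,y) ((SimpleGraph.mem_edgeSet _).mpr hadj) hnot ⟨?_, ?_⟩
  · intro e he
    rcases Set.mem_insert_iff.mp he with rfl | he
    · exact (SimpleGraph.mem_edgeSet _).mpr hadj
    · exact hM.1.1 e he
  · intro e he f hf hef v hve hvf
    rcases Set.mem_insert_iff.mp he with rfl | heM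
    · rcases Set.mem_insert_iff.mp hf with rfl | hfM
      · exact hef rfl
      · rcases Sym2.mem_iff.mp hve with rfl | rfl
        · exact hx ⟨f, hfM, hvf⟩
        · exact hy ⟨f, hfM, hvf⟩
    · rcases Set.mem_insert_iff.mp hf with rfl | hfM
      · rcases Sym2.mem_iff.mp hvf with rfl | rfl
        · exact hx ⟨e, heM, hve⟩
        · exact hy ⟨e, heM, hve⟩
      · exact hM.1.2 e heM f hfM hef v hve hvf

lemma eq_of_tv3_mem {s : Sym2 (CV u t a b)} (hs : s ∈ (CG u t a b).edgeSet)
    (i : Fin a) (h : tv i (3 : Fin 4) ∈ s) : s = s(tv i 2, tv i 3) := by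
  rcases edge_shapes hs with ⟨i1, i2, hne, rfl⟩ | ⟨i1, j1, hij, rfl⟩ | ⟨i1, x1, hi0, rfl⟩ |
      ⟨x1, k, k', hkk, rfl⟩ | ⟨j1, g1, hj0, rfl⟩ | ⟨g1, rfl⟩ <;>
    simp [Sym2.mem_iff, Sym2.eq_iff, Sum.inr.injEq, Sum.inl.injEq, Prod.mk.injEq,
      Fin.ext_iff, reduceCtorEq] at h ⊢ <;>
    omega

lemma eq_of_gv1_mem {s : Sym2 (CV u t a b)} (hs : s ∈ (CG u t a b).edgeSet)
    (j : Fin b) (h : gv j (1 : Fin 2) ∈ s) : s = s(gv j 0, gv j 1) := by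
  rcases edge_shapes hs with ⟨i1, i2, hne, rfl⟩ | ⟨i1, j1, hij, rfl⟩ | ⟨i1, x1, hi0, rfl⟩ |
      ⟨x1, k, k', hkk, rfl⟩ | ⟨j1, g1, hj0, rfl⟩ | ⟨g1, rfl⟩ <;>
    simp [Sym2.mem_iff, Sym2.eq_iff, Sum.inr.injEq, Sum.inl.injEq, Prod.mk.injEq,
      Fin.ext_iff, reduceCtorEq] at h ⊢ <;>
    omega

lemma tail_covered {M : Set (Sym2 (CV u t a b))}
    (hM : IsMaximalMatchingSet (CG u t a b) M) (i : Fin a) : Cov M (tv i 2) := by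
  by_contra hc
  have hd : ¬ Cov M (tv i (3 : Fin 4)) := by
    rintro ⟨e, he, hve⟩
    have heq := eq_of_tv3_mem (hM.1.1 e he) i hve
    exact hc ⟨e, he, by rw [heq]; simp⟩
  exact uncovered_not_adj hM (x := tv i 2) (y := tv i 3) ⟨rfl, Or.inl (by decide)⟩ hc hd

lemma gadget_covered {M : Set (Sym2 (CV u t a b))}
    (hM : IsMaximalMatchingSet (CG u t a b) M) (j : Fin b) : Cov M (gv j 0) := by
  by_contra hc
  have hd : ¬ Cov M (gv j (1 : Fin 2)) := by
    rintro ⟨e, he, hve⟩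
    have heq := eq_of_gv1_mem (hM.1.1 e he) j hve
    exact hc ⟨e, he, by rw [heq]; simp⟩
  exact uncovered_not_adj hM (x := gv j 0) (y := gv j 1) ⟨rfl, by decide⟩ hc hd

lemma clique_covered {M : Set (Sym2 (CV u t a b))}
    (hM : IsMaximalMatchingSet (CG u t a b) M) {i i' : Fin (2*u)} (hne : i ≠ i') :
    Cov M (cv i) ∨ Cov M (cv i') := by
  by_contra hc
  push_neg at hc
  exact uncovered_not_adj hM (show (CG u t a b).Adj (cv i) (cv i') by
    simpa [cg_adj, cadj] using hne) hc.1 hc.2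

lemma minMatch_lower {M : Set (Sym2 (CV u t a b))}
    (hM : IsMaximalMatchingSet (CG u t a b) M) : u + a + b ≤ M.ncard := by
  classical
  have hfin : M.Finite := Set.toFinite M
  set MF := hfin.toFinset with hMF
  have hmem : ∀ e ∈ MF, e ∈ M := fun e he => hfin.mem_toFinset.mp he
  -- tokens for tails
  have hT : ∀ i : Fin a, ∃ e, e ∈ M ∧ tv i 2 ∈ e := fun i => tail_covered hM i
  choose fT hT1 hT2 using hT
  -- tokens for gadgets
  have hG : ∀ j : Fin b, ∃ e, e ∈ M ∧ gv j 0 ∈ e := fun j => gadget_covered hM j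
  choose fG hG1 hG2 using hG
  -- zones
  set K := MF.filter (fun e => ∃ i : Fin (2*u), cv i ∈ e) with hK
  set A := MF.filter (fun e => ∃ i : Fin a, tv i 2 ∈ e) with hA
  set B := MF.filter (fun e => ∃ j : Fin b, gv j 0 ∈ e) with hB
  -- no edge contains two kinds of special vertices
  have hshape : ∀ e ∈ M, ∀ x y : CV u t a b, x ∈ e → y ∈ e →
      ¬ (CG u t a b).Adj x y → x = y := by
    intro e he x y hx hy hnadj
    by_contra hne
    exact hnadj (adj_of_two_mem (hM.1.1 e he) hx hy hne)
  have hcardA : a ≤ A.card := by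
    have hle : (Finset.univ : Finset (Fin a)).card ≤ A.card := by
      apply Finset.card_le_card_of_injOn fT
      · intro i _
        exact Finset.mem_filter.mpr ⟨hfin.mem_toFinset.mpr (hT1 i), ⟨i, hT2 i⟩⟩
      · intro i _ i' _ hii
        by_contra hne
        have heq : tv i 2 = tv i' (2 : Fin 4) :=
          hshape (fT i) (hT1 i) _ _ (hT2 i) (hii ▸ hT2 i') (by simp [cg_adj, cadj, hne])
        simp only [Sum.inr.injEq, Sum.inl.injEq, Prod.mk.injEq] at heq
        exact hne heq.1
    simpa using hle
  have hcardB : b ≤ B.card := by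
    have hle : (Finset.univ : Finset (Fin b)).card ≤ B.card := by
      apply Finset.card_le_card_of_injOn fG
      · intro j _
        exact Finset.mem_filter.mpr ⟨hfin.mem_toFinset.mpr (hG1 j), ⟨j, hG2 j⟩⟩
      · intro j _ j' _ hjj
        by_contra hne
        have heq : gv j 0 = gv j' (0 : Fin 2) :=
          hshape (fG j) (hG1 j) _ _ (hG2 j) (hjj ▸ hG2 j') (by simp [cg_adj, cadj, hne])
        simp only [Sum.inr.injEq, Prod.mk.injEq] at heq
        exact hne heq.1
    simpa using hle
  -- clique zone: at least u edges
  have hcardK : u ≤ K.card := by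
    set CCu := Finset.univ.filter (fun i : Fin (2*u) => ¬ Cov M (cv i)) with hCCu
    set CCc := Finset.univ.filter (fun i : Fin (2*u) => Cov M (cv i)) with hCCc
    have hCCu1 : CCu.card ≤ 1 := by
      refine Finset.card_le_one.mpr ?_
      intro i hi j hj
      by_contra hne
      rcases clique_covered hM hne with hcov | hcov
      · exact (Finset.mem_filter.mp hi).2 hcov
      · exact (Finset.mem_filter.mp hj).2 hcov
    have hsum : CCc.card + CCu.card = 2*u := by
      rw [hCCc, hCCu, Finset.card_filter_add_card_filter_not]
      simp
    have hCCc1 : 2*u - 1 ≤ CCc.card := by omega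
    -- map covered clique vertices to their edges, at most 2-to-1
    have hccov : ∀ i ∈ CCc, Cov M (cv i) := fun i hi => (Finset.mem_filter.mp hi).2
    set fC : Fin (2*u) → Sym2 (CV u t a b) := fun i =>
      if hcov : Cov M (cv i) then hcov.choose else s(cv i, cv i) with hfC
    have hfC1 : ∀ i ∈ CCc, fC i ∈ M ∧ cv i ∈ fC i := by
      intro i hi
      have hcov := hccov i hi
      rw [hfC]
      simp only [dif_pos hcov]
      exact ⟨hcov.choose_spec.1, hcov.choose_spec.2⟩
    have himg : CCc.image fC ⊆ K := by
      intro e he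
      obtain ⟨i, hi, rfl⟩ := Finset.mem_image.mp he
      exact Finset.mem_filter.mpr ⟨hfin.mem_toFinset.mpr (hfC1 i hi).1, ⟨i, (hfC1 i hi).2⟩⟩
    have hfiber : ∀ e ∈ CCc.image fC, (CCc.filter (fun i => fC i = e)).card ≤ 2 := by
      intro e _
      calc (CCc.filter (fun i => fC i = e)).card
          ≤ (MatchAux.efin e).card := by
            apply Finset.card_le_card_of_injOn (fun i => cv i)
            · intro i hi
              obtain ⟨hi1, hi2⟩ := Finset.mem_filter.mp hi
              rw [Finset.mem_coe, MatchAux.mem_efin, ← hi2]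
              exact (hfC1 i hi1).2
            · intro i _ i' _ hii
              simpa using hii
        _ ≤ 2 := MatchAux.efin_card_le e
    have h2K : CCc.card ≤ 2 * (CCc.image fC).card :=
      Finset.card_le_mul_card_image CCc 2 hfiber
    have := Finset.card_le_card himg
    omega
  -- the three zones are disjoint
  have hAK : Disjoint A K := by
    rw [Finset.disjoint_left]
    intro e heA heK
    obtain ⟨heM, i, hi⟩ := Finset.mem_filter.mp heA
    obtain ⟨_, i', hi'⟩ := Finset.mem_filter.mp heK
    exact absurd (hshape e (hmem e heM) _ _ hi hi' (by simp [cg_adj, cadj])) (by simp)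
  have hBK : Disjoint B K := by
    rw [Finset.disjoint_left]
    intro e heB heK
    obtain ⟨heM, j, hj⟩ := Finset.mem_filter.mp heB
    obtain ⟨_, i', hi'⟩ := Finset.mem_filter.mp heK
    exact absurd (hshape e (hmem e heM) _ _ hj hi' (by simp [cg_adj, cadj])) (by simp)
  have hAB : Disjoint A B := by
    rw [Finset.disjoint_left]
    intro e heA heB
    obtain ⟨heM, i, hi⟩ := Finset.mem_filter.mp heA
    obtain ⟨_, j, hj⟩ := Finset.mem_filter.mp heB
    exact absurd (hshape e (hmem e heM) _ _ hi hj (by simp [cg_adj, cadj])) (by simp)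
  have hunion : (A ∪ B ∪ K).card = A.card + B.card + K.card := by
    rw [Finset.card_union_of_disjoint (Finset.disjoint_union_left.mpr ⟨hAK, hBK⟩),
      Finset.card_union_of_disjoint hAB]
  have hsub : A ∪ B ∪ K ⊆ MF := by
    intro e he
    rcases Finset.mem_union.mp he with he | he
    · rcases Finset.mem_union.mp he with he | he
      · exact (Finset.mem_filter.mp he).1
      · exact (Finset.mem_filter.mp he).1
    · exact (Finset.mem_filter.mp he).1
  have := Finset.card_le_card hsub
  rw [Set.ncard_eq_toFinset_card M hfin, ← hMF]
  omega

lemma minMatchNum_CG : minMatchNum (CG u t a b) = u + a + b :=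
  MatchAux.minMatchNum_eq ⟨Set.range (FQ u t a b), FQ_isMaximal, FQ_ncard⟩
    (fun _ hM => minMatch_lower hM)

/-- Index type for the induced matching. -/
abbrev II (a b : ℕ) : Type := Fin 1 ⊕ (Fin a ⊕ Fin b)

def FI (u t a b : ℕ) (hu : 1 ≤ u) (ht : 1 ≤ t) : II a b → Sym2 (CV u t a b)
  | Sum.inl _ => s(cv ⟨1, by omega⟩, wv ⟨1, by omega⟩)
  | Sum.inr (Sum.inl i) => s(tv i 2, tv i 3)
  | Sum.inr (Sum.inr j) => s(gv j 0, gv j 1)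

lemma FI_master (hu : 1 ≤ u) (ht : 1 ≤ t) :
    ∀ x y (v : CV u t a b), v ∈ FI u t a b hu ht x → v ∈ FI u t a b hu ht y → x = y := by
  intro x y v hx hy
  rcases x with ⟨i,hi⟩|⟨⟨i,hi⟩|⟨j,hj⟩⟩ <;>
    rcases y with ⟨i',hi'⟩|⟨⟨i',hi'⟩|⟨j',hj'⟩⟩ <;>
    simp only [FI, Sym2.mem_iff] at hx hy <;>
    rcases hx with rfl | rfl <;>
    simp_all [Fin.ext_iff] <;>
    omega

lemma FI_injective (hu : 1 ≤ u) (ht : 1 ≤ t) : Function.Injective (FI u t a b hu ht) := by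
  intro x y hxy
  obtain ⟨v, hv⟩ := sym2_exists_mem (FI u t a b hu ht x)
  exact FI_master hu ht x y v hv (hxy ▸ hv)

lemma FI_sep (hu : 1 ≤ u) (ht : 1 ≤ t) {g : Sym2 (CV u t a b)}
    (hg : g ∈ (CG u t a b).edgeSet) (x y : II a b) (v1 v2 : CV u t a b)
    (hv1g : v1 ∈ g) (hv1x : v1 ∈ FI u t a b hu ht x)
    (hv2g : v2 ∈ g) (hv2y : v2 ∈ FI u t a b hu ht y) : x = y := by
  rcases edge_shapes hg with ⟨i1, i2, hne, rfl⟩ | ⟨i1, j1, hij, rfl⟩ | ⟨i1, x1, hi0, rfl⟩ |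
      ⟨x1, k, k', hkk, rfl⟩ | ⟨j1, g1, hj0, rfl⟩ | ⟨g1, rfl⟩ <;>
    rcases x with ⟨ix,hix⟩|⟨⟨ix,hix⟩|⟨jx,hjx⟩⟩ <;>
    rcases y with ⟨iy,hiy⟩|⟨⟨iy,hiy⟩|⟨jy,hjy⟩⟩ <;>
    simp only [FI, Sym2.mem_iff] at hv1g hv1x hv2g hv2y <;>
    rcases hv1g with rfl | rfl <;>
    rcases hv2g with rfl | rfl <;>
    simp_all [Fin.ext_iff] <;>
    omega

lemma FI_isInduced (hu : 1 ≤ u) (ht : 1 ≤ t) :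
    IsInducedMatchingSet (CG u t a b) (Set.range (FI u t a b hu ht)) := by
  constructor
  · constructor
    · rintro _ ⟨x, rfl⟩
      rcases x with ⟨i,hi⟩|⟨⟨i,hi⟩|⟨j,hj⟩⟩ <;>
        simp [FI, SimpleGraph.mem_edgeSet, cg_adj, cadj, Fin.ext_iff] <;> decide
    · rintro _ ⟨x, rfl⟩ _ ⟨y, rfl⟩ hxy v hvx hvy
      exact hxy (congrArg _ (FI_master hu ht x y v hvx hvy))
  · rintro _ ⟨x, rfl⟩ _ ⟨y, rfl⟩ hxy g hg ⟨⟨v1, hv1g, hv1x⟩, ⟨v2, hv2g, hv2y⟩⟩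
    exact hxy (congrArg _ (FI_sep hu ht hg x y v1 v2 hv1g hv1x hv2g hv2y))

lemma FI_ncard (hu : 1 ≤ u) (ht : 1 ≤ t) :
    (Set.range (FI u t a b hu ht)).ncard = 1 + a + b := by
  rw [← Set.image_univ, Set.ncard_image_of_injective _ (FI_injective hu ht), Set.ncard_univ,
    Nat.card_eq_fintype_card]
  simp [II]
  omega

lemma tail_edge_form {e : Sym2 (CV u t a b)} (he : e ∈ (CG u t a b).edgeSet) (i : Fin a)
    (hek : ∃ k : Fin 4, tv i k ∈ e) (hec : ¬ ∃ i' : Fin (2*u), cv i' ∈ e) :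
    ∃ k k' : Fin 4, (k:ℕ) + 1 = (k':ℕ) ∧ e = s(tv i k, tv i k') := by
  obtain ⟨k0, hk0⟩ := hek
  rcases edge_shapes he with ⟨i1, i2, hne, rfl⟩ | ⟨i1, j1, hij, rfl⟩ | ⟨i1, x1, hi0, rfl⟩ |
      ⟨x1, k, k', hkk, rfl⟩ | ⟨j1, g1, hj0, rfl⟩ | ⟨g1, rfl⟩
  · simp at hk0
  · simp at hk0
  · exact absurd ⟨i1, by simp⟩ hec
  · refine ⟨k, k', hkk, ?_⟩
    have : x1 = i := by
      rcases Sym2.mem_iff.mp hk0 with hv | hv <;>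
        simp only [Sum.inr.injEq, Sum.inl.injEq, Prod.mk.injEq] at hv <;>
        exact hv.1.symm
    rw [this]
  · simp at hk0
  · simp at hk0

lemma gadget_edge_form {e : Sym2 (CV u t a b)} (he : e ∈ (CG u t a b).edgeSet) (j : Fin b)
    (hek : ∃ k : Fin 2, gv j k ∈ e) : gv j 0 ∈ e := by
  obtain ⟨k0, hk0⟩ := hek
  rcases edge_shapes he with ⟨i1, i2, hne, rfl⟩ | ⟨i1, j1, hij, rfl⟩ | ⟨i1, x1, hi0, rfl⟩ |
      ⟨x1, k, k', hkk, rfl⟩ | ⟨j1, g1, hj0, rfl⟩ | ⟨g1, rfl⟩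
  · simp at hk0
  · simp at hk0
  · simp at hk0
  · simp at hk0
  · rcases Sym2.mem_iff.mp hk0 with hv | hv
    · simp at hv
    · simp only [Sum.inr.injEq, Prod.mk.injEq] at hv
      rw [← hv.1]
      simp
  · have : g1 = j := by
      rcases Sym2.mem_iff.mp hk0 with hv | hv <;>
        simp only [Sum.inr.injEq, Prod.mk.injEq] at hv <;> exact hv.1.symm
    rw [this]
    simp

lemma indMatch_upper {M : Set (Sym2 (CV u t a b))}
    (hM : IsInducedMatchingSet (CG u t a b) M) : M.ncard ≤ 1 + a + b := by
  classical
  have hfin : M.Finite := Set.toFinite M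
  set MF := hfin.toFinset with hMF
  have hmem : ∀ e ∈ MF, e ∈ M := fun e he => hfin.mem_toFinset.mp he
  -- if two edges of M share a vertex they are equal
  have hshare : ∀ e ∈ M, ∀ f ∈ M, ∀ v : CV u t a b, v ∈ e → v ∈ f → e = f := by
    intro e he f hf v hv hv'
    by_contra hef
    exact hM.1.2 e he f hf hef v hv hv'
  set Kz := MF.filter (fun e => ∃ i : Fin (2*u), cv i ∈ e) with hKz
  set Tz := fun i : Fin a =>
    MF.filter (fun e => (∃ k : Fin 4, tv i k ∈ e) ∧ ¬ ∃ i' : Fin (2*u), cv i' ∈ e) with hTz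
  set Gz := fun j : Fin b => MF.filter (fun e => ∃ k : Fin 2, gv j k ∈ e) with hGz
  have hKz1 : Kz.card ≤ 1 := by
    refine Finset.card_le_one.mpr ?_
    intro e he f hf
    obtain ⟨heM, i, hi⟩ := Finset.mem_filter.mp he
    obtain ⟨hfM, i', hi'⟩ := Finset.mem_filter.mp hf
    by_cases hii : i = i'
    · exact hshare e (hmem e heM) f (hmem f hfM) (cv i) hi (hii ▸ hi')
    · by_contra hef
      refine hM.2 e (hmem e heM) f (hmem f hfM) hef s(cv i, cv i')
        ((SimpleGraph.mem_edgeSet _).mpr (by simpa [cg_adj, cadj] using hii)) ?_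
      exact ⟨⟨cv i, by simp, hi⟩, ⟨cv i', by simp, hi'⟩⟩
  have hTz1 : ∀ i : Fin a, (Tz i).card ≤ 1 := by
    intro i
    refine Finset.card_le_one.mpr ?_
    intro e he f hf
    obtain ⟨heM, hek, hec⟩ := Finset.mem_filter.mp he
    obtain ⟨hfM, hfk, hfc⟩ := Finset.mem_filter.mp hf
    obtain ⟨k1, k1', hk1, rfl⟩ := tail_edge_form (hM.1.1 _ (hmem _ heM)) i hek hec
    obtain ⟨k2, k2', hk2, rfl⟩ := tail_edge_form (hM.1.1 _ (hmem _ hfM)) i hfk hfc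
    have hb1 : (k1':ℕ) < 4 := k1'.2
    have hb2 : (k2':ℕ) < 4 := k2'.2
    have hcase : (k1:ℕ) = (k2:ℕ) ∨ (k1':ℕ) = (k2:ℕ) ∨ (k2':ℕ) = (k1:ℕ) ∨
        (k1:ℕ) + 2 = (k2:ℕ) ∨ (k2:ℕ) + 2 = (k1:ℕ) := by omega
    have heM' := hmem _ heM
    have hfM' := hmem _ hfM
    rcases hcase with hc | hc | hc | hc | hc
    · have e1 : k1 = k2 := Fin.ext hc
      have e2 : k1' = k2' := Fin.ext (by omega)
      rw [e1, e2]
    · exact hshare _ heM' _ hfM' (tv i k1') (by simp)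
        (by rw [show k2 = k1' from Fin.ext hc.symm]; simp)
    · exact hshare _ heM' _ hfM' (tv i k1) (by simp)
        (by rw [show k2' = k1 from Fin.ext hc]; simp)
    · by_contra hef
      refine hM.2 _ heM' _ hfM' hef s(tv i k1', tv i k2)
        ((SimpleGraph.mem_edgeSet _).mpr ⟨rfl, Or.inl (by omega)⟩) ?_
      exact ⟨⟨tv i k1', by simp, by simp⟩, ⟨tv i k2, by simp, by simp⟩⟩
    · by_contra hef
      refine hM.2 _ heM' _ hfM' hef s(tv i k2', tv i k1)
        ((SimpleGraph.mem_edgeSet _).mpr ⟨rfl, Or.inl (by omega)⟩) ?_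
      exact ⟨⟨tv i k1, by simp, by simp⟩, ⟨tv i k2', by simp, by simp⟩⟩
  have hGz1 : ∀ j : Fin b, (Gz j).card ≤ 1 := by
    intro j
    refine Finset.card_le_one.mpr ?_
    intro e he f hf
    obtain ⟨heM, hek⟩ := Finset.mem_filter.mp he
    obtain ⟨hfM, hfk⟩ := Finset.mem_filter.mp hf
    exact hshare _ (hmem _ heM) _ (hmem _ hfM) (gv j 0)
      (gadget_edge_form (hM.1.1 _ (hmem _ heM)) j hek)
      (gadget_edge_form (hM.1.1 _ (hmem _ hfM)) j hfk)
  have hcover : MF ⊆ Kz ∪ (Finset.univ : Finset (Fin a)).biUnion Tz ∪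
      (Finset.univ : Finset (Fin b)).biUnion Gz := by
    intro e he
    have he' := hM.1.1 e (hmem e he)
    rcases edge_shapes he' with ⟨i1, i2, hne, rfl⟩ | ⟨i1, j1, hij, rfl⟩ | ⟨i1, x1, hi0, rfl⟩ |
        ⟨x1, k, k', hkk, rfl⟩ | ⟨j1, g1, hj0, rfl⟩ | ⟨g1, rfl⟩
    · exact Finset.mem_union_left _ (Finset.mem_union_left _
        (Finset.mem_filter.mpr ⟨he, i1, by simp⟩))
    · exact Finset.mem_union_left _ (Finset.mem_union_left _
        (Finset.mem_filter.mpr ⟨he, i1, by simp⟩))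
    · exact Finset.mem_union_left _ (Finset.mem_union_left _
        (Finset.mem_filter.mpr ⟨he, i1, by simp⟩))
    · refine Finset.mem_union_left _ (Finset.mem_union_right _
        (Finset.mem_biUnion.mpr ⟨x1, Finset.mem_univ _, Finset.mem_filter.mpr
          ⟨he, ⟨k, by simp⟩, ?_⟩⟩))
      rintro ⟨i', hi'⟩
      rcases Sym2.mem_iff.mp hi' with hv | hv <;> simp at hv
    · exact Finset.mem_union_right _
        (Finset.mem_biUnion.mpr ⟨g1, Finset.mem_univ _, Finset.mem_filter.mpr
          ⟨he, 0, by simp⟩⟩)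
    · exact Finset.mem_union_right _
        (Finset.mem_biUnion.mpr ⟨g1, Finset.mem_univ _, Finset.mem_filter.mpr
          ⟨he, 0, by simp⟩⟩)
  have hcard : MF.card ≤ 1 + a + b := by
    calc MF.card ≤ (Kz ∪ (Finset.univ : Finset (Fin a)).biUnion Tz ∪
        (Finset.univ : Finset (Fin b)).biUnion Gz).card := Finset.card_le_card hcover
      _ ≤ (Kz ∪ (Finset.univ : Finset (Fin a)).biUnion Tz).card +
          ((Finset.univ : Finset (Fin b)).biUnion Gz).card := Finset.card_union_le _ _
      _ ≤ Kz.card + ((Finset.univ : Finset (Fin a)).biUnion Tz).card +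
          ((Finset.univ : Finset (Fin b)).biUnion Gz).card := by
            have := Finset.card_union_le Kz ((Finset.univ : Finset (Fin a)).biUnion Tz)
            omega
      _ ≤ 1 + a + b := by
            have h1 : ((Finset.univ : Finset (Fin a)).biUnion Tz).card ≤ a := by
              calc ((Finset.univ : Finset (Fin a)).biUnion Tz).card
                  ≤ ∑ i : Fin a, (Tz i).card := Finset.card_biUnion_le
                _ ≤ ∑ _i : Fin a, 1 := Finset.sum_le_sum (fun i _ => hTz1 i)
                _ = a := by simp
            have h2 : ((Finset.univ : Finset (Fin b)).biUnion Gz).card ≤ b := by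
              calc ((Finset.univ : Finset (Fin b)).biUnion Gz).card
                  ≤ ∑ j : Fin b, (Gz j).card := Finset.card_biUnion_le
                _ ≤ ∑ _j : Fin b, 1 := Finset.sum_le_sum (fun j _ => hGz1 j)
                _ = b := by simp
            omega
  rw [Set.ncard_eq_toFinset_card M hfin, ← hMF]
  exact hcard

lemma indMatchNum_CG (hu : 1 ≤ u) (ht : 1 ≤ t) :
    indMatchNum (CG u t a b) = 1 + a + b :=
  MatchAux.indMatchNum_eq ⟨Set.range (FI u t a b hu ht), FI_isInduced hu ht, FI_ncard hu ht⟩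
    (fun _ hM => indMatch_upper hM)

end Constr

theorem stmt_1 (p q r : ℕ) (hp : 2 ≤ p) (hpq : p ≤ q) (hqr : q < r) (hr2q : r ≤ 2 * q) :
    (∀ (V : Type) [Fintype V] (G : SimpleGraph V), G.Connected →
      indMatchNum G = p → minMatchNum G = q → matchNum G = r →
      2 * r ≤ Fintype.card V) ∧
    (∃ G : SimpleGraph (Fin (2 * r)), G.Connected ∧
      indMatchNum G = p ∧ minMatchNum G = q ∧ matchNum G = r) := by
  constructor
  · intro V _ G _ _ _ hmatch
    obtain ⟨M, hM, hcard⟩ := MatchAux.exists_matching_ncard_matchNum G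
    have := MatchAux.two_mul_ncard_le hM
    rw [hcard, hmatch] at this
    exact this
  · -- the construction
    set u : ℕ := q - p + 1 with hu_def
    set tp : ℕ := min (r - q) (q - p + 1) with htp_def
    set bp : ℕ := min (p - 1) (2*q - r) with hbp_def
    set ap : ℕ := p - 1 - bp with hap_def
    have hu : 1 ≤ u := by omega
    have ht : 1 ≤ tp := by omega
    have htu : tp ≤ u := by omega
    have hip : 1 + ap + bp = p := by omega
    have hiq : u + ap + bp = q := by omega
    have hir : u + tp + 2*ap + bp = r := by omega
    have hcard : Fintype.card (Constr.CV u tp ap bp) = 2 * r := by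
      rw [Constr.card_CV]
      omega
    set e := Fintype.equivFinOfCardEq hcard with he_def
    set G0 := Constr.CG u tp ap bp with hG0
    refine ⟨{ Adj := fun x y => G0.Adj (e.symm x) (e.symm y),
              symm := ⟨fun x y hh => G0.adj_symm hh⟩,
              loopless := ⟨fun x hh => G0.irrefl hh⟩ }, ?_, ?_, ?_, ?_⟩
    case _ =>
      refine MatchAux.connected_iso e G0 _ ?_ (Constr.cg_connected hu ht htu)
      intro x y
      simp
    case _ =>
      rw [MatchAux.indMatchNum_iso e G0 _ (by intro x y; simp),
        Constr.indMatchNum_CG hu ht]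
      omega
    case _ =>
      rw [MatchAux.minMatchNum_iso e G0 _ (by intro x y; simp),
        Constr.minMatchNum_CG]
      omega
    case _ =>
      rw [MatchAux.matchNum_iso e G0 _ (by intro x y; simp),
        Constr.matchNum_CG htu]
      omega
end

section
/- Let G be a finite connected simple graph with ind-match(G) ≥ 2 and min-match(G) = match(G). Then G has no perfect matching, i.e., there is no matching M of G such that every vertex of G belongs to some edge of M. -/
variable {V : Type*}

section Aux

variable [Fintype V] {G : SimpleGraph V}

/-- The set of vertices covered by a set of edges. -/
def coverSet (M : Set (Sym2 V)) : Set V := {v | ∃ e ∈ M, v ∈ e}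

lemma ncard_le_card_sym2 (s : Set (Sym2 V)) : s.ncard ≤ Nat.card (Sym2 V) :=
  le_trans (Set.ncard_le_ncard (Set.subset_univ s) Set.finite_univ)
    (le_of_eq (Set.ncard_univ (Sym2 V)))

lemma matching_subset {M N : Set (Sym2 V)} (h : IsMatchingSet G M) (hNM : N ⊆ M) :
    IsMatchingSet G N :=
  ⟨fun e he => h.1 e (hNM he), fun e he f hf hef v hv => h.2 e (hNM he) f (hNM hf) hef v hv⟩

lemma ncard_coverSet : ∀ {M : Set (Sym2 V)}, IsMatchingSet G M →
    (coverSet M).ncard = 2 * M.ncard := by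
  intro M
  refine Set.Finite.induction_on
    (motive := fun s _ => IsMatchingSet G s → (coverSet s).ncard = 2 * s.ncard)
    M (Set.toFinite M) ?_ ?_
  · intro _
    have : coverSet (∅ : Set (Sym2 V)) = ∅ := by
      ext v; simp [coverSet]
    simp [this]
  · intro e s hes hsfin ih hM
    have hs : IsMatchingSet G s := matching_subset hM (Set.subset_insert e s)
    obtain ⟨x, y, rfl⟩ : ∃ x y, e = s(x, y) := by
      obtain ⟨⟨x, y⟩, h⟩ := Quot.exists_rep e
      exact ⟨x, y, h.symm⟩
    have hadj : G.Adj x y := (G.mem_edgeSet).mp (hM.1 _ (Set.mem_insert _ _))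
    have hcov : coverSet (insert s(x, y) s) = ({x, y} : Set V) ∪ coverSet s := by
      ext v
      simp only [coverSet, Set.mem_setOf_eq, Set.mem_union, Set.mem_insert_iff]
      constructor
      · rintro ⟨f, hf | hf, hvf⟩
        · subst hf; left; simpa [Sym2.mem_iff] using hvf
        · exact Or.inr ⟨f, hf, hvf⟩
      · rintro (hv | ⟨f, hf, hvf⟩)
        · exact ⟨s(x, y), Or.inl rfl, by simpa [Sym2.mem_iff] using hv⟩
        · exact ⟨f, Or.inr hf, hvf⟩
    have hdisj : Disjoint ({x, y} : Set V) (coverSet s) := by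
      rw [Set.disjoint_left]
      rintro v hv ⟨f, hf, hvf⟩
      have hne : s(x, y) ≠ f := fun h => hes (h ▸ hf)
      have := hM.2 s(x, y) (Set.mem_insert _ _) f (Set.mem_insert_of_mem _ hf) hne v
        (by simpa [Sym2.mem_iff] using hv)
      exact this hvf
    rw [hcov, Set.ncard_union_eq hdisj (Set.toFinite _) (Set.toFinite _),
      Set.ncard_pair hadj.ne, ih hs, Set.ncard_insert_of_notMem hes (Set.toFinite _)]
    ring

lemma extend_to_maximal (G : SimpleGraph V) (M : Set (Sym2 V)) (hM : IsMatchingSet G M) :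
    ∃ M', IsMaximalMatchingSet G M' ∧ M ⊆ M' := by
  obtain ⟨n, hn⟩ : ∃ n, Nat.card (Sym2 V) - M.ncard ≤ n := ⟨_, le_refl _⟩
  induction n generalizing M with
  | zero =>
    by_cases hmax : ∀ e ∈ G.edgeSet, e ∉ M → ¬ IsMatchingSet G (insert e M)
    · exact ⟨M, ⟨hM, hmax⟩, subset_refl M⟩
    · push_neg at hmax
      obtain ⟨e, _, heM, hins⟩ := hmax
      have h1 : (insert e M).ncard = M.ncard + 1 :=
        Set.ncard_insert_of_notMem heM (Set.toFinite M)
      have h2 := ncard_le_card_sym2 (insert e M)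
      omega
  | succ n ih =>
    by_cases hmax : ∀ e ∈ G.edgeSet, e ∉ M → ¬ IsMatchingSet G (insert e M)
    · exact ⟨M, ⟨hM, hmax⟩, subset_refl M⟩
    · push_neg at hmax
      obtain ⟨e, _, heM, hins⟩ := hmax
      have h1 : (insert e M).ncard = M.ncard + 1 :=
        Set.ncard_insert_of_notMem heM (Set.toFinite M)
      obtain ⟨M', hM', hsub⟩ := ih (insert e M) hins (by omega)
      exact ⟨M', hM', (Set.subset_insert e M).trans hsub⟩

lemma maximal_covers (G : SimpleGraph V) (heq : minMatchNum G = matchNum G)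
    (Mp : Set (Sym2 V)) (hMp : IsMatchingSet G Mp) (hMpcov : ∀ v : V, ∃ e ∈ Mp, v ∈ e) :
    ∀ M, IsMaximalMatchingSet G M → ∀ v : V, ∃ e ∈ M, v ∈ e := by
  intro M hM v
  have hbdd : BddAbove {n | ∃ M : Set (Sym2 V), IsMatchingSet G M ∧ M.ncard = n} := by
    refine ⟨Nat.card (Sym2 V), ?_⟩
    rintro n ⟨N, _, rfl⟩
    exact ncard_le_card_sym2 N
  have h1 : Mp.ncard ≤ matchNum G := le_csSup hbdd ⟨Mp, hMp, rfl⟩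
  have h2 : minMatchNum G ≤ M.ncard := Nat.sInf_le ⟨M, hM, rfl⟩
  have h3 : Mp.ncard ≤ M.ncard := by omega
  have hcovMp : coverSet Mp = Set.univ := by
    ext w; simpa [coverSet] using hMpcov w
  have h4 : (Set.univ : Set V).ncard ≤ (coverSet M).ncard := by
    rw [← hcovMp, ncard_coverSet hMp, ncard_coverSet hM.1]
    omega
  have h5 : coverSet M = Set.univ :=
    Set.eq_of_subset_of_ncard_le (Set.subset_univ _) h4 Set.finite_univ
  have : v ∈ coverSet M := h5 ▸ Set.mem_univ v
  exact this

/-- The core configuration lemma: if every maximal matching covers all vertices,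
then the configuration `a—b`, `m—c`, `a—m`, with `b` not adjacent to `c` and
appropriate distinctness, is impossible. -/
lemma core_config (G : SimpleGraph V)
    (hcov : ∀ M, IsMaximalMatchingSet G M → ∀ v : V, ∃ e ∈ M, v ∈ e)
    {a b m c : V} (hab : G.Adj a b) (hmc : G.Adj m c) (ham : G.Adj a m)
    (hbc : ¬ G.Adj b c) (hbcne : b ≠ c) (hac : a ≠ c) (hbm : b ≠ m) : False := by
  -- M0 = {s(a,b), s(m,c)} is a matching
  have hne0 : s(a, b) ≠ s(m, c) := by
    intro h
    have : a ∈ s(m, c) := h ▸ (Sym2.mem_iff.mpr (Or.inl rfl))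
    rcases Sym2.mem_iff.mp this with h' | h'
    · exact ham.ne h'
    · exact hac h'
  have hM0 : IsMatchingSet G ({s(a, b), s(m, c)} : Set (Sym2 V)) := by
    constructor
    · rintro e (rfl | rfl) <;> simp_all [SimpleGraph.mem_edgeSet]
    · rintro e (rfl | rfl) f (rfl | rfl) hef v hv <;> try exact absurd rfl hef
      · intro hvf
        rcases Sym2.mem_iff.mp hv with rfl | rfl <;>
          rcases Sym2.mem_iff.mp hvf with h | h
        · exact ham.ne h
        · exact hac h
        · exact hbm h
        · exact hbcne h
      · intro hvf
        rcases Sym2.mem_iff.mp hv with rfl | rfl <;>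
          rcases Sym2.mem_iff.mp hvf with h | h
        · exact ham.ne h.symm
        · exact hbm h.symm
        · exact hac h.symm
        · exact hbcne h.symm
  obtain ⟨M1, hM1max, hM1sub⟩ := extend_to_maximal G _ hM0
  have hM1 : IsMatchingSet G M1 := hM1max.1
  have habM1 : s(a, b) ∈ M1 := hM1sub (Set.mem_insert _ _)
  have hmcM1 : s(m, c) ∈ M1 := hM1sub (Set.mem_insert_of_mem _ rfl)
  have cov1 := hcov M1 hM1max
  -- uniqueness of covering edges in M1
  have only : ∀ (v : V) (g₀ : Sym2 V), g₀ ∈ M1 → v ∈ g₀ →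
      ∀ g ∈ M1, v ∈ g → g = g₀ := by
    intro v g₀ hg₀ hvg₀ g hg hvg
    by_contra hne
    exact hM1.2 g hg g₀ hg₀ hne v hvg hvg₀
  -- the modified matching M'
  set M' : Set (Sym2 V) := insert s(a, m) (M1 \ {s(a, b), s(m, c)}) with hM'def
  have hamne : ∀ g ∈ M1 \ ({s(a, b), s(m, c)} : Set (Sym2 V)), ∀ v ∈ s(a, m), v ∉ g := by
    rintro g ⟨hg, hgne⟩ v hv hvg
    simp only [Set.mem_insert_iff, Set.mem_singleton_iff] at hgne
    push_neg at hgne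
    rcases Sym2.mem_iff.mp hv with h | h
    · exact hgne.1 (only v s(a, b) habM1 (Sym2.mem_iff.mpr (Or.inl h)) g hg hvg)
    · exact hgne.2 (only v s(m, c) hmcM1 (Sym2.mem_iff.mpr (Or.inl h)) g hg hvg)
  have hM' : IsMatchingSet G M' := by
    constructor
    · rintro e (rfl | ⟨he, -⟩)
      · exact G.mem_edgeSet.mpr ham
      · exact hM1.1 e he
    · rintro e (rfl | he) f (rfl | hf) hef v hv hvf
      · exact hef rfl
      · exact hamne f hf v hv hvf
      · exact hamne e he v hvf hv
      · exact hM1.2 e he.1 f hf.1 hef v hv hvf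
  -- M' covers everything except b and c
  have covM' : ∀ v : V, v ≠ b → v ≠ c → ∃ e ∈ M', v ∈ e := by
    intro v hvb hvc
    obtain ⟨g, hg, hvg⟩ := cov1 v
    by_cases h1 : g = s(a, b)
    · subst h1
      rcases Sym2.mem_iff.mp hvg with h | h
      · exact ⟨s(a, m), Set.mem_insert _ _, Sym2.mem_iff.mpr (Or.inl h)⟩
      · exact absurd h hvb
    · by_cases h2 : g = s(m, c)
      · subst h2
        rcases Sym2.mem_iff.mp hvg with h | h
        · exact ⟨s(a, m), Set.mem_insert _ _, Sym2.mem_iff.mpr (Or.inr h)⟩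
        · exact absurd h hvc
      · exact ⟨g, Set.mem_insert_of_mem _ ⟨hg, by simp [h1, h2]⟩, hvg⟩
  -- b is not covered by M'
  have notb : ∀ e ∈ M', b ∉ e := by
    rintro e (rfl | ⟨he, hene⟩) hb
    · rcases Sym2.mem_iff.mp hb with h | h
      · exact hab.ne' h
      · exact hbm h
    · simp only [Set.mem_insert_iff, Set.mem_singleton_iff] at hene
      push_neg at hene
      exact hene.1 (only b s(a, b) habM1 (Sym2.mem_iff.mpr (Or.inr rfl)) e he hb)
  obtain ⟨M2, hM2max, hM2sub⟩ := extend_to_maximal G M' hM'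
  obtain ⟨h, hh2, hbh⟩ := hcov M2 hM2max b
  have hhM' : h ∉ M' := fun hmem => notb h hmem hbh
  obtain ⟨z, rfl⟩ := Sym2.mem_iff_exists.mp hbh
  have hbz : G.Adj b z := G.mem_edgeSet.mp (hM2max.1.1 _ hh2)
  -- z must be c
  have hz : z = c := by
    by_contra hzc
    have hzb : z ≠ b := hbz.ne'
    obtain ⟨e', he', hze'⟩ := covM' z hzb hzc
    have he'M2 : e' ∈ M2 := hM2sub he'
    have hne : e' ≠ s(b, z) := fun h => hhM' (h ▸ he')
    exact hM2max.1.2 e' he'M2 s(b, z) hh2 hne z hze'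
      (Sym2.mem_iff.mpr (Or.inr rfl))
  exact hbc (hz ▸ hbz)

/-- Walking from a "far" edge towards `c`, we eventually find the core configuration. -/
lemma walk_aux (G : SimpleGraph V)
    (hcov : ∀ M, IsMaximalMatchingSet G M → ∀ v : V, ∃ e ∈ M, v ∈ e)
    (c d : V) :
    ∀ {u : V} (_ : G.Walk u c) (b' : V), G.Adj u b' →
      ¬ G.Adj u c → ¬ G.Adj u d → ¬ G.Adj b' c → ¬ G.Adj b' d →
      u ≠ c → u ≠ d → b' ≠ c → b' ≠ d → False := by
  intro u w
  induction w with
  | nil =>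
    intro b' _ _ _ _ _ huc _ _ _
    exact huc rfl
  | @cons u v c h p ih =>
    intro b' hub' huc hud hb'c hb'd hune hund hb'ne hb'nd
    by_cases hvc : v = c
    · exact huc (hvc ▸ h)
    · by_cases hvd : v = d
      · exact hud (hvd ▸ h)
      · by_cases hadjc : G.Adj v c
        · have hb'v : b' ≠ v := by
            intro he; rw [he] at hb'c; exact hb'c hadjc
          exact core_config G hcov hub' hadjc h hb'c hb'ne hune hb'v
        · by_cases hadjd : G.Adj v d
          · have hb'v : b' ≠ v := by
              intro he; rw [he] at hb'd; exact hb'd hadjd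
            exact core_config G hcov hub' hadjd h hb'd hb'nd hund hb'v
          · exact ih u h.symm hadjc hadjd huc hud hvc hvd hune hund

end Aux

theorem stmt_3 (V : Type) [Fintype V] (G : SimpleGraph V) (hconn : G.Connected)
    (hind : 2 ≤ indMatchNum G) (heq : minMatchNum G = matchNum G) :
    ¬ ∃ M : Set (Sym2 V), IsMatchingSet G M ∧ ∀ v : V, ∃ e ∈ M, v ∈ e := by
  rintro ⟨Mp, hMp, hMpcov⟩
  have hcov := maximal_covers G heq Mp hMp hMpcov
  -- extract an induced matching with at least two edges
  set S := {n | ∃ M : Set (Sym2 V), IsInducedMatchingSet G M ∧ M.ncard = n} with hS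
  have hSne : S.Nonempty := by
    refine ⟨0, ∅, ⟨⟨?_, ?_⟩, ?_⟩, by simp⟩ <;> simp
  have hSbdd : BddAbove S := by
    refine ⟨Nat.card (Sym2 V), ?_⟩
    rintro n ⟨N, _, rfl⟩
    exact ncard_le_card_sym2 N
  have hmem : indMatchNum G ∈ S := Nat.sSup_mem hSne hSbdd
  obtain ⟨Mi, hMi, hMicard⟩ := hmem
  have h2 : 1 < Mi.ncard := by omega
  obtain ⟨e, f, he, hf, hef⟩ := (Set.one_lt_ncard_iff (Set.toFinite Mi)).mp h2
  obtain ⟨a, b, rfl⟩ : ∃ x y, e = s(x, y) := by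
    obtain ⟨⟨x, y⟩, h⟩ := Quot.exists_rep e
    exact ⟨x, y, h.symm⟩
  obtain ⟨c, d, rfl⟩ : ∃ x y, f = s(x, y) := by
    obtain ⟨⟨x, y⟩, h⟩ := Quot.exists_rep f
    exact ⟨x, y, h.symm⟩
  have hab : G.Adj a b := G.mem_edgeSet.mp (hMi.1.1 _ he)
  have hcd : G.Adj c d := G.mem_edgeSet.mp (hMi.1.1 _ hf)
  -- no adjacencies between {a,b} and {c,d}
  have notAdj : ∀ x y : V, x ∈ s(a, b) → y ∈ s(c, d) → ¬ G.Adj x y := by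
    intro x y hx hy hadj
    exact hMi.2 _ he _ hf hef s(x, y) (G.mem_edgeSet.mpr hadj)
      ⟨⟨x, Sym2.mem_iff.mpr (Or.inl rfl), hx⟩, ⟨y, Sym2.mem_iff.mpr (Or.inr rfl), hy⟩⟩
  -- disjointness of e and f
  have hdisj : ∀ v : V, v ∈ s(a, b) → v ∉ s(c, d) :=
    fun v hv => hMi.1.2 _ he _ hf hef v hv
  have hma : a ∈ s(a, b) := Sym2.mem_iff.mpr (Or.inl rfl)
  have hmb : b ∈ s(a, b) := Sym2.mem_iff.mpr (Or.inr rfl)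
  have hmc : c ∈ s(c, d) := Sym2.mem_iff.mpr (Or.inl rfl)
  have hmd : d ∈ s(c, d) := Sym2.mem_iff.mpr (Or.inr rfl)
  have hane : a ≠ c := fun h => hdisj a hma (h ▸ hmc)
  have hand : a ≠ d := fun h => hdisj a hma (h ▸ hmd)
  have hbne : b ≠ c := fun h => hdisj b hmb (h ▸ hmc)
  have hbnd : b ≠ d := fun h => hdisj b hmb (h ▸ hmd)
  obtain ⟨w⟩ := hconn.preconnected a c
  exact walk_aux G hcov c d w b hab (notAdj a c hma hmc) (notAdj a d hma hmd)
    (notAdj b c hmb hmc) (notAdj b d hmb hmd) hane hand hbne hbnd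
end

section
/- For all integers p, q and r with 2 ≤ p ≤ q < r ≤ 2q: every finite connected simple graph G with ind-match(G) = p, min-match(G) = q and match(G) = r has at least 2r − 1 edges. -/
variable {V : Type*}

/-- A connected graph on `n` vertices has at least `n - 1` edges. -/
lemma connected_card_le_edges (V : Type) [Fintype V] (G : SimpleGraph V)
    (hconn : G.Connected) : Fintype.card V - 1 ≤ G.edgeSet.ncard := by
  classical
  obtain ⟨v⟩ := hconn.nonempty
  have key : ∀ w : V, w ≠ v → ∃ u : V, G.Adj w u ∧ G.dist u v < G.dist w v := by
    intro w hw
    obtain ⟨p, hp, hlen⟩ := hconn.exists_path_of_dist w v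
    have hpos : 0 < G.dist w v := hconn.pos_dist_of_ne hw
    cases p with
    | nil => simp at hlen; simp at hpos
    | @cons _ u _ hadj q =>
      refine ⟨u, hadj, ?_⟩
      have : G.dist u v ≤ q.length := G.dist_le q
      simp [SimpleGraph.Walk.length_cons] at hlen
      omega
  choose! pred hadj hdist using key
  have hinj : Set.InjOn (fun w => s(w, pred w)) {w : V | w ≠ v} := by
    intro a ha b hb hab
    simp only [Sym2.eq, Sym2.rel_iff', Prod.mk.injEq, Prod.swap_prod_mk] at hab
    rcases hab with ⟨h1, _⟩ | ⟨h1, h2⟩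
    · exact h1
    · have d1 := hdist a ha
      have d2 := hdist b hb
      rw [h2] at d1
      rw [← h1] at d2
      omega
  have hmaps : Set.MapsTo (fun w => s(w, pred w)) {w : V | w ≠ v} G.edgeSet := by
    intro w hw
    exact (hadj w hw)
  have hle : ({w : V | w ≠ v}).ncard ≤ G.edgeSet.ncard := by
    rw [← Set.ncard_image_of_injOn hinj]
    exact Set.ncard_le_ncard (Set.image_subset_iff.mpr hmaps) (Set.toFinite _)
  have hcard : ({w : V | w ≠ v}).ncard = Fintype.card V - 1 := by
    rw [show {w : V | w ≠ v} = {v}ᶜ by ext; simp]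
    rw [Set.ncard_eq_toFinset_card']
    simp [Set.toFinset_compl, Finset.card_compl]
  omega

lemma card_ge_of_matching (V : Type) [Fintype V] (G : SimpleGraph V)
    (M : Set (Sym2 V)) (hM : IsMatchingSet G M) : 2 * M.ncard ≤ Fintype.card V := by
  classical
  have hfin : M.Finite := Set.toFinite _
  set F := hfin.toFinset with hF
  have hcard : F.card = M.ncard := (Set.ncard_eq_toFinset_card M hfin).symm
  set f : Sym2 V × Bool → V := fun p => if p.2 then p.1.out.1 else p.1.out.2 with hf
  have hmem : ∀ (e : Sym2 V) (b : Bool), f (e, b) ∈ e := by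
    intro e b
    cases b <;> simp [hf, Sym2.out_fst_mem, Sym2.out_snd_mem]
  have hinj : ∀ a ∈ F ×ˢ (Finset.univ : Finset Bool), ∀ b ∈ F ×ˢ (Finset.univ : Finset Bool),
      f a = f b → a = b := by
    rintro ⟨e, b⟩ he ⟨e', b'⟩ he' heq
    rw [Finset.mem_product, hF, Set.Finite.mem_toFinset] at he he'
    by_cases hee : e = e'
    · subst hee
      by_cases hbb : b = b'
      · rw [hbb]
      · exfalso
        have hd : ¬ e.IsDiag := G.not_isDiag_of_mem_edgeSet (hM.1 e he.1)
        have hout : e.out.1 = e.out.2 := by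
          cases b <;> cases b' <;> simp [hf] at heq hbb ⊢
          · exact heq.symm
          · exact heq
        apply hd
        have he2 : s(e.out.1, e.out.2) = e := Quot.out_eq e
        rw [← he2]
        exact Sym2.isDiag_iff_proj_eq.mpr hout
    · exfalso
      have := hM.2 e he.1 e' he'.1 hee (f (e, b)) (hmem e b)
      rw [heq] at this
      exact this (hmem e' b')
  have h := Finset.card_le_card_of_injOn f (fun x _ => Finset.mem_univ (f x)) hinj
  simp only [Finset.card_product, Finset.card_univ, Fintype.card_bool, hcard] at h
  omega

theorem stmt_4 (p q r : ℕ) (hp : 2 ≤ p) (hpq : p ≤ q) (hqr : q < r) (hr2q : r ≤ 2 * q)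
    (V : Type) [Fintype V] (G : SimpleGraph V) (hconn : G.Connected)
    (hind : indMatchNum G = p) (hmin : minMatchNum G = q) (hmatch : matchNum G = r) :
    2 * r - 1 ≤ G.edgeSet.ncard := by
  classical
  -- the set of matching sizes
  set S := {n | ∃ M : Set (Sym2 V), IsMatchingSet G M ∧ M.ncard = n} with hS
  have hne : S.Nonempty := ⟨0, ∅, ⟨by simp, by simp⟩, by simp⟩
  have hbdd : BddAbove S := by
    refine ⟨G.edgeSet.ncard, ?_⟩
    rintro n ⟨M, hM, rfl⟩
    exact Set.ncard_le_ncard hM.1 (Set.toFinite _)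
  have hr : r ∈ S := by
    rw [← hmatch]
    exact Nat.sSup_mem hne hbdd
  obtain ⟨M, hM, hMcard⟩ := hr
  have h1 := card_ge_of_matching V G M hM
  have h2 := connected_card_le_edges V G hconn
  omega
end

section
/- For all integers p and r with 2 ≤ p ≤ r: every finite connected simple graph G with ind-match(G) = p and min-match(G) = match(G) = r has at least 2r edges. -/
variable {V : Type*}

section Aux

open SimpleGraph


/-- A finite connected graph has at least `card V - 1` edges. -/
lemma aux_conn_card_le {W : Type*} [Fintype W] (H : SimpleGraph W) (h : H.Connected) :
    Fintype.card W ≤ H.edgeSet.ncard + 1 := by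
  classical
  obtain ⟨root⟩ := h.nonempty
  have hP : ∀ v : W, v ≠ root → ∃ w, H.Adj v w ∧ H.dist w root < H.dist v root := by
    intro v hv
    obtain ⟨p, hp⟩ := h.exists_walk_length_eq_dist v root
    cases p with
    | nil => exact absurd rfl hv
    | @cons _ w _ hadj q =>
        refine ⟨w, hadj, ?_⟩
        have h1 : H.dist w root ≤ q.length := H.dist_le q
        simp only [SimpleGraph.Walk.length_cons] at hp
        omega
  choose! f hf1 hf2 using hP
  have hinj : Set.InjOn (fun v : W => s(v, f v)) ((Finset.univ.erase root : Finset W) : Set W) := by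
    intro a ha b hb hab
    simp only [Finset.coe_erase, Set.mem_diff, Finset.coe_univ, Set.mem_univ,
      Set.mem_singleton_iff, true_and] at ha hb
    simp only [Sym2.eq_iff] at hab
    rcases hab with ⟨rfl, _⟩ | ⟨h1, h2⟩
    · rfl
    · exfalso
      have ha2 := hf2 a ha
      have hb2 := hf2 b hb
      rw [h2] at ha2
      rw [← h1] at hb2
      omega
  have hmem : ∀ v ∈ ((Finset.univ.erase root : Finset W) : Set W), s(v, f v) ∈ H.edgeSet := by
    intro v hv
    simp only [Finset.coe_erase, Set.mem_diff, Set.mem_singleton_iff] at hv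
    exact (hf1 v hv.2)
  have hle : (Finset.univ.erase root).card ≤ H.edgeSet.ncard := by
    have := Set.ncard_le_ncard (Set.image_subset_iff.mpr hmem) (Set.toFinite _)
    calc (Finset.univ.erase root).card
        = ((Finset.univ.erase root : Finset W) : Set W).ncard := (Set.ncard_coe_finset _).symm
      _ = ((fun v : W => s(v, f v)) '' _).ncard := (Set.ncard_image_of_injOn hinj).symm
      _ ≤ H.edgeSet.ncard := this
  have := Finset.card_erase_add_one (Finset.mem_univ root)
  simp only [Finset.card_univ] at this
  omega

variable {G : SimpleGraph V} {M : Set (Sym2 V)}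

variable {V : Type*} {G : SimpleGraph V} {M : Set (Sym2 V)}

lemma aux_eq_of_mem_mem (hM : IsMatchingSet G M) {e f : Sym2 V} (he : e ∈ M) (hf : f ∈ M)
    {v : V} (hve : v ∈ e) (hvf : v ∈ f) : e = f := by
  by_contra h
  exact hM.2 e he f hf h v hve hvf

lemma aux_sym2_eq {e : Sym2 V} {a b : V} (ha : a ∈ e) (hb : b ∈ e) (hab : a ≠ b) :
    e = s(a, b) := by
  obtain ⟨x, y, rfl⟩ : ∃ x y, e = s(x, y) := by
    induction e using Sym2.ind with | _ x y => exact ⟨x, y, rfl⟩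
  rw [Sym2.mem_iff] at ha hb
  rcases ha with rfl | rfl <;> rcases hb with rfl | rfl
  · exact absurd rfl hab
  · rfl
  · exact Sym2.eq_swap
  · exact absurd rfl hab

/-- The setoid identifying the two endpoints of each edge of the matching `M`. -/
def msetoid (G : SimpleGraph V) (M : Set (Sym2 V)) (hM : IsMatchingSet G M) : Setoid V where
  r a b := a = b ∨ ∃ e ∈ M, a ∈ e ∧ b ∈ e
  iseqv := by
    refine ⟨fun a => Or.inl rfl, ?_, ?_⟩
    · rintro a b (rfl | ⟨e, he, h1, h2⟩)
      · exact Or.inl rfl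
      · exact Or.inr ⟨e, he, h2, h1⟩
    · rintro a b c (rfl | ⟨e, he, h1, h2⟩) h
      · exact h
      · rcases h with rfl | ⟨f, hf, h3, h4⟩
        · exact Or.inr ⟨e, he, h1, h2⟩
        · exact Or.inr ⟨e, he, h1, (aux_eq_of_mem_mem hM he hf h2 h3).symm ▸ h4⟩

variable (hM : IsMatchingSet G M)

def qmk (hM : IsMatchingSet G M) : V → Quotient (msetoid G M hM) :=
  Quotient.mk (msetoid G M hM)

lemma qmk_eq_iff {a b : V} :
    qmk hM a = qmk hM b ↔ (a = b ∨ ∃ e ∈ M, a ∈ e ∧ b ∈ e) :=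
  ⟨fun h => Quotient.exact h, fun h => Quotient.sound h⟩

/-- The quotient graph obtained by contracting every edge of the matching. -/
def qgraph (hM : IsMatchingSet G M) : SimpleGraph (Quotient (msetoid G M hM)) where
  Adj x y := x ≠ y ∧ ∃ a b, qmk hM a = x ∧ qmk hM b = y ∧ G.Adj a b
  symm := ⟨by
    rintro x y ⟨hne, a, b, ha, hb, hab⟩
    exact ⟨hne.symm, b, a, hb, ha, hab.symm⟩⟩
  loopless := ⟨fun x h => h.1 rfl⟩

lemma qreach {a b : V} (h : G.Reachable a b) : (qgraph hM).Reachable (qmk hM a) (qmk hM b) := by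
  obtain ⟨w⟩ := h
  induction w with
  | nil => exact SimpleGraph.Reachable.refl _
  | @cons u c _ hadj q ih =>
      refine SimpleGraph.Reachable.trans ?_ ih
      by_cases hq : qmk hM u = qmk hM c
      · rw [hq]
      · exact SimpleGraph.Adj.reachable ⟨hq, u, c, rfl, rfl, hadj⟩

lemma qconn (h : G.Connected) : (qgraph hM).Connected := by
  have hne : Nonempty V := h.nonempty
  rw [SimpleGraph.connected_iff]
  refine ⟨?_, ⟨qmk hM hne.some⟩⟩
  intro x y
  induction x using Quotient.ind
  induction y using Quotient.ind
  exact qreach hM (h.preconnected _ _)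


lemma aux_rep (g : Sym2 V) : ∃ a b, g = s(a, b) := by
  induction g using Sym2.ind with | _ x y => exact ⟨x, y, rfl⟩

lemma qmap_mem {h : Sym2 V} (hE : h ∈ G.edgeSet) (hnM : h ∉ M) :
    Sym2.map (qmk hM) h ∈ (qgraph hM).edgeSet := by
  obtain ⟨a, b, rfl⟩ := aux_rep h
  rw [Sym2.map_pair_eq, SimpleGraph.mem_edgeSet]
  rw [SimpleGraph.mem_edgeSet] at hE
  refine ⟨?_, a, b, rfl, rfl, hE⟩
  intro hq
  rcases (qmk_eq_iff hM).1 hq with rfl | ⟨m, hm, h1, h2⟩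
  · exact hE.ne rfl
  · exact hnM ((aux_sym2_eq h1 h2 hE.ne).symm ▸ hm)

lemma qmap_surj : (qgraph hM).edgeSet ⊆ Sym2.map (qmk hM) '' (G.edgeSet \ M) := by
  intro x hx
  obtain ⟨cc, dd, rfl⟩ := aux_rep x
  rw [SimpleGraph.mem_edgeSet] at hx
  obtain ⟨hne, a, b, ha, hb, hadj⟩ := hx
  have hnM : s(a, b) ∉ M := by
    intro hmem
    exact hne (ha ▸ hb ▸ ((qmk_eq_iff hM).2 (Or.inr ⟨s(a, b), hmem, Sym2.mem_mk_left a b, Sym2.mem_mk_right a b⟩)))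
  refine ⟨s(a, b), ⟨G.mem_edgeSet.mpr hadj, hnM⟩, ?_⟩
  rw [Sym2.map_pair_eq, ha, hb]


end Aux

theorem stmt_5 (p r : ℕ) (hp : 2 ≤ p) (hpr : p ≤ r)
    (V : Type) [Fintype V] (G : SimpleGraph V) (hconn : G.Connected)
    (hind : indMatchNum G = p) (hmin : minMatchNum G = r) (hmatch : matchNum G = r) :
    2 * r ≤ G.edgeSet.ncard := by
  classical
  have hr2 : 2 ≤ r := hp.trans hpr
  -- extract a maximum matching `M` of size `r`
  obtain ⟨M, hM, hMcard⟩ : ∃ M : Set (Sym2 V), IsMatchingSet G M ∧ M.ncard = r := by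
    have hne : Set.Nonempty {n | ∃ M : Set (Sym2 V), IsMatchingSet G M ∧ M.ncard = n} :=
      ⟨0, ∅, ⟨fun e he => absurd he (Set.notMem_empty e),
        fun e he => absurd he (Set.notMem_empty e)⟩, by simp⟩
    have hbdd : BddAbove {n | ∃ M : Set (Sym2 V), IsMatchingSet G M ∧ M.ncard = n} := by
      refine ⟨(Set.univ : Set (Sym2 V)).ncard, ?_⟩
      rintro n ⟨N, hN, rfl⟩
      exact Set.ncard_le_ncard (Set.subset_univ N) Set.finite_univ
    have hmem := Nat.sSup_mem hne hbdd
    rw [show sSup {n | ∃ M : Set (Sym2 V), IsMatchingSet G M ∧ M.ncard = n} = matchNum G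
      from rfl, hmatch] at hmem
    exact hmem
  have hminlb : ∀ N : Set (Sym2 V), IsMaximalMatchingSet G N → r ≤ N.ncard := by
    intro N hN
    have h1 : minMatchNum G ≤ N.ncard := Nat.sInf_le ⟨N, hN, rfl⟩
    rw [hmin] at h1
    exact h1
  have hMsub : M ⊆ G.edgeSet := fun e he => hM.1 e he
  have hsplit : G.edgeSet.ncard = (G.edgeSet \ M).ncard + r := by
    rw [← hMcard]
    exact (Set.ncard_diff_add_ncard_of_subset hMsub (Set.toFinite _)).symm
  suffices hFr : r ≤ (G.edgeSet \ M).ncard by omega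
  by_contra hF
  push_neg at hF
  -- the quotient graph
  haveI : Finite (Quotient (msetoid G M hM)) := Quotient.finite _
  haveI : Fintype (Quotient (msetoid G M hM)) := Fintype.ofFinite _
  have hG'conn := qconn hM hconn
  have himg : (qgraph hM).edgeSet = Sym2.map (qmk hM) '' (G.edgeSet \ M) := by
    refine Set.Subset.antisymm (qmap_surj hM) ?_
    rintro x ⟨g, hgF, rfl⟩
    exact qmap_mem hM hgF.1 hgF.2
  have hE'le : (qgraph hM).edgeSet.ncard ≤ (G.edgeSet \ M).ncard := by
    rw [himg]
    exact Set.ncard_image_le (Set.toFinite _)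
  -- `r ≤ card Q`
  have hψinj : Set.InjOn (fun e : Sym2 V => qmk hM e.out.1) M := by
    intro e he f hf hef
    simp only at hef
    rcases (qmk_eq_iff hM).1 hef with heq | ⟨m, hm, h1, h2⟩
    · exact aux_eq_of_mem_mem hM he hf (Sym2.out_fst_mem e)
        (by rw [heq]; exact Sym2.out_fst_mem f)
    · exact (aux_eq_of_mem_mem hM he hm (Sym2.out_fst_mem e) h1).trans
        (aux_eq_of_mem_mem hM hm hf h2 (Sym2.out_fst_mem f))
  have hrQ : r ≤ Nat.card (Quotient (msetoid G M hM)) := by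
    calc r = M.ncard := hMcard.symm
    _ = ((fun e : Sym2 V => qmk hM e.out.1) '' M).ncard :=
        (Set.ncard_image_of_injOn hψinj).symm
    _ ≤ (Set.univ : Set (Quotient (msetoid G M hM))).ncard :=
        Set.ncard_le_ncard (Set.subset_univ _) Set.finite_univ
    _ = Nat.card (Quotient (msetoid G M hM)) := Set.ncard_univ _
  have hQle : Nat.card (Quotient (msetoid G M hM)) ≤ (qgraph hM).edgeSet.ncard + 1 := by
    have h2 := aux_conn_card_le (qgraph hM) hG'conn
    rwa [Nat.card_eq_fintype_card]
  -- pin down all cardinalities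
  have hE' : (qgraph hM).edgeSet.ncard = r - 1 := by omega
  have hFcard : (G.edgeSet \ M).ncard = r - 1 := by omega
  have hQcard : Nat.card (Quotient (msetoid G M hM)) = r := by omega
  -- every vertex is covered by `M`
  have hcov : ∀ v : V, ∃ e ∈ M, v ∈ e := by
    intro v
    have himgM : (fun e : Sym2 V => qmk hM e.out.1) '' M = Set.univ := by
      apply Set.eq_of_subset_of_ncard_le (Set.subset_univ _)
      rw [Set.ncard_univ, hQcard, Set.ncard_image_of_injOn hψinj, hMcard]
    have hv : qmk hM v ∈ (fun e : Sym2 V => qmk hM e.out.1) '' M := by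
      rw [himgM]; trivial
    obtain ⟨e, he, heq⟩ := hv
    rcases (qmk_eq_iff hM).1 heq with heq2 | ⟨m, hm, h1, h2⟩
    · exact ⟨e, he, heq2 ▸ Sym2.out_fst_mem e⟩
    · exact ⟨m, hm, h2⟩
  -- injectivity of the edge map on `F`
  have hinjF : Set.InjOn (Sym2.map (qmk hM)) (G.edgeSet \ M) := by
    apply Set.injOn_of_ncard_image_eq _ (Set.toFinite _)
    rw [← himg, hE', hFcard]
  -- there is a vertex of degree 1 in the quotient graph
  obtain ⟨c, hc1⟩ : ∃ c, (qgraph hM).degree c = 1 := by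
    by_contra hno
    push_neg at hno
    have hd2 : ∀ c, 2 ≤ (qgraph hM).degree c := by
      intro c
      have hpos : 0 < (qgraph hM).degree c := by
        rw [SimpleGraph.degree_pos_iff_exists_adj]
        obtain ⟨y, hy⟩ := Fintype.exists_ne_of_one_lt_card
          (by rw [← Nat.card_eq_fintype_card]; omega) c
        obtain ⟨w⟩ := hG'conn.preconnected c y
        cases w with
        | nil => exact absurd rfl hy
        | cons hadj q => exact ⟨_, hadj⟩
      have := hno c
      omega
    have hsum := (qgraph hM).sum_degrees_eq_twice_card_edges
    have hlb : 2 * Fintype.card (Quotient (msetoid G M hM)) ≤ ∑ v, (qgraph hM).degree v := by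
      calc 2 * Fintype.card (Quotient (msetoid G M hM))
          = ∑ _v : Quotient (msetoid G M hM), 2 := by
            rw [Finset.sum_const, Finset.card_univ, smul_eq_mul, mul_comm]
      _ ≤ ∑ v, (qgraph hM).degree v := Finset.sum_le_sum fun v _ => hd2 v
    have hcard : (qgraph hM).edgeFinset.card = (qgraph hM).edgeSet.ncard := by
      rw [← SimpleGraph.coe_edgeFinset, Set.ncard_coe_finset]
    rw [← Nat.card_eq_fintype_card] at hlb
    omega
  -- the unique neighbour `d` of `c`
  obtain ⟨d, hd⟩ := Finset.card_eq_one.mp hc1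
  have hcd : (qgraph hM).Adj c d := by
    rw [← SimpleGraph.mem_neighborFinset, hd]
    exact Finset.mem_singleton_self d
  have huniq : ∀ y, (qgraph hM).Adj c y → y = d := by
    intro y hy
    have h3 := (SimpleGraph.mem_neighborFinset _ _ _).mpr hy
    rw [hd] at h3
    simpa using h3
  -- pull the edge `s(c,d)` back to an edge `g = s(a,b)` of `G`
  have hcdE : s(c, d) ∈ (qgraph hM).edgeSet := (qgraph hM).mem_edgeSet.mpr hcd
  rw [himg] at hcdE
  obtain ⟨g, hgF, hgmap⟩ := hcdE
  obtain ⟨a, b, hgab, hac, hbd⟩ : ∃ a b, g = s(a, b) ∧ qmk hM a = c ∧ qmk hM b = d := by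
    obtain ⟨a, b, rfl⟩ := aux_rep g
    rw [Sym2.map_pair_eq, Sym2.eq_iff] at hgmap
    rcases hgmap with ⟨h1, h2⟩ | ⟨h1, h2⟩
    · exact ⟨a, b, rfl, h1, h2⟩
    · exact ⟨b, a, Sym2.eq_swap, h2, h1⟩
  have hgE : g ∈ G.edgeSet := hgF.1
  have hgM : g ∉ M := hgF.2
  have hadjab : G.Adj a b := G.mem_edgeSet.mp (hgab ▸ hgE)
  obtain ⟨e, heM, hae⟩ := hcov a
  obtain ⟨u, heu⟩ : ∃ u, e = s(a, u) := Sym2.mem_iff_exists.mp hae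
  obtain ⟨e', he'M, hbe'⟩ := hcov b
  obtain ⟨y, he'y⟩ : ∃ y, e' = s(b, y) := Sym2.mem_iff_exists.mp hbe'
  have hue : u ∈ e := by rw [heu]; exact Sym2.mem_mk_right a u
  have hye' : y ∈ e' := by rw [he'y]; exact Sym2.mem_mk_right b y
  have hee' : e ≠ e' := by
    rintro rfl
    exact hcd.ne (hac ▸ hbd ▸ congrArg (qmk hM) rfl ▸
      ((qmk_eq_iff hM).2 (Or.inr ⟨e, heM, hae, hbe'⟩)) ▸ rfl)
  have hau : a ≠ u := by
    have h4 : G.Adj a u := G.mem_edgeSet.mp (heu ▸ hMsub heM)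
    exact h4.ne
  have hby : b ≠ y := by
    have h4 : G.Adj b y := G.mem_edgeSet.mp (he'y ▸ hMsub he'M)
    exact h4.ne
  -- the smaller maximal matching
  set M' : Set (Sym2 V) := insert g (M \ {e, e'}) with hM'def
  have hsubM' : M \ {e, e'} ⊆ M' := Set.subset_insert _ _
  have hgM' : g ∈ M' := Set.mem_insert _ _
  have hM'match : IsMatchingSet G M' := by
    constructor
    · rintro f hf
      rcases Set.mem_insert_iff.mp hf with rfl | hf2
      · exact hgE
      · exact hMsub hf2.1
    · intro f1 h1 f2 h2 hne12 t ht1 ht2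
      have key : ∀ f ∈ M \ ({e, e'} : Set (Sym2 V)), t ∈ g → t ∉ f := by
        intro f hf htg htf
        rw [hgab] at htg
        rcases Sym2.mem_iff.mp htg with rfl | rfl
        · exact hf.2 (by rw [aux_eq_of_mem_mem hM hf.1 heM htf hae]; exact Set.mem_insert e {e'})
        · exact hf.2 (by rw [aux_eq_of_mem_mem hM hf.1 he'M htf hbe']
                         exact Set.mem_insert_of_mem e rfl)
      rcases Set.mem_insert_iff.mp h1 with rfl | h1' <;>
        rcases Set.mem_insert_iff.mp h2 with rfl | h2'
      · exact hne12 rfl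
      · exact key f2 h2' ht1 ht2
      · exact key f1 h1' ht2 ht1
      · exact hM.2 f1 h1'.1 f2 h2'.1 hne12 t ht1 ht2
  have hM'card : M'.ncard = r - 1 := by
    have hgnot : g ∉ M \ ({e, e'} : Set (Sym2 V)) := fun hc => hgM hc.1
    have hpairsub : ({e, e'} : Set (Sym2 V)) ⊆ M := by
      rintro z hz
      rcases hz with rfl | hz
      · exact heM
      · rw [Set.mem_singleton_iff] at hz; rw [hz]; exact he'M
    rw [hM'def, Set.ncard_insert_of_notMem hgnot (Set.toFinite _),
      Set.ncard_diff hpairsub (Set.toFinite _), Set.ncard_pair hee', hMcard]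
    omega
  have hM'max : IsMaximalMatchingSet G M' := by
    refine ⟨hM'match, ?_⟩
    rintro h hhE hhM' ⟨hmat1, hmat2⟩
    obtain ⟨a1, b1, rfl⟩ := aux_rep h
    have hab1 : G.Adj a1 b1 := G.mem_edgeSet.mp hhE
    have hdisj : ∀ t, t ∈ s(a1, b1) → ∀ f ∈ M', t ∉ f := by
      intro t ht f hf hcontra
      exact hmat2 s(a1, b1) (Set.mem_insert _ _) f (Set.mem_insert_of_mem _ hf)
        (fun hc => hhM' (hc ▸ hf)) t ht hcontra
    have hkey : ∀ t, t ∈ s(a1, b1) → t = u ∨ t = y := by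
      intro t ht
      obtain ⟨m, hm, htm⟩ := hcov t
      by_cases hme : m = e
      · subst hme
        rw [heu] at htm
        rcases Sym2.mem_iff.mp htm with rfl | rfl
        · exact absurd (hgab ▸ Sym2.mem_mk_left t b : t ∈ g) (hdisj t ht g hgM')
        · exact Or.inl rfl
      by_cases hme' : m = e'
      · subst hme'
        rw [he'y] at htm
        rcases Sym2.mem_iff.mp htm with rfl | rfl
        · exact absurd (hgab ▸ Sym2.mem_mk_right a t : t ∈ g) (hdisj t ht g hgM')
        · exact Or.inr rfl
      · exact absurd htm (hdisj t ht m (hsubM' ⟨hm, by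
          intro hc
          rcases hc with hc | hc
          · exact hme hc
          · exact hme' (Set.mem_singleton_iff.mp hc)⟩))
    have hA := hkey a1 (Sym2.mem_mk_left a1 b1)
    have hB := hkey b1 (Sym2.mem_mk_right a1 b1)
    have huy : s(a1, b1) = s(u, y) := by
      rcases hA with rfl | rfl <;> rcases hB with rfl | rfl
      · exact absurd rfl hab1.ne
      · rfl
      · exact Sym2.eq_swap
      · exact absurd rfl hab1.ne
    have hhM : s(a1, b1) ∉ M := by
      intro hc
      have huh : u ∈ s(a1, b1) := by rw [huy]; exact Sym2.mem_mk_left u y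
      have hhe : s(a1, b1) = e := aux_eq_of_mem_mem hM hc heM huh hue
      have hyh : y ∈ s(a1, b1) := by rw [huy]; exact Sym2.mem_mk_right u y
      have hye : y ∈ e := hhe ▸ hyh
      exact hee' (aux_eq_of_mem_mem hM heM he'M hye hye')
    have hqu : qmk hM u = c := by
      rw [← hac]
      exact (qmk_eq_iff hM).2 (Or.inr ⟨e, heM, hue, hae⟩)
    have hadj' : (qgraph hM).Adj c (qmk hM y) := by
      have h5 := qmap_mem hM (huy ▸ hhE) (huy ▸ hhM)
      rw [Sym2.map_pair_eq, SimpleGraph.mem_edgeSet, hqu] at h5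
      exact h5
    have hyd : qmk hM y = d := huniq _ hadj'
    have hug : s(u, y) = g := by
      refine hinjF ⟨huy ▸ hhE, huy ▸ hhM⟩ hgF ?_
      rw [Sym2.map_pair_eq, hqu, hyd, hgmap]
    have hugm : u ∈ g := by rw [← hug]; exact Sym2.mem_mk_left u y
    rw [hgab] at hugm
    rcases Sym2.mem_iff.mp hugm with h6 | h6
    · exact hau h6.symm
    · exact hee' (aux_eq_of_mem_mem hM heM he'M hue (h6 ▸ hbe'))
  have := hminlb M' hM'max
  rw [hM'card] at this
  omega
end

section
/- For every integer q ≥ 1: every finite connected simple graph G with ind-match(G) = 1, min-match(G) = q and match(G) = 2q has at least (2q+1 choose 2) edges, and there exists a finite connected simple graph G with ind-match(G) = 1, min-match(G) = q, match(G) = 2q and exactly (2q+1 choose 2) edges. (That is, the minimum number of edges of such graphs is (2q+1 choose 2).) -/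
variable {V : Type*}

set_option linter.unusedSectionVars false
set_option linter.unusedTactic false
set_option linter.unreachableTactic false
set_option linter.unnecessarySimpa false

section General

variable [Fintype V] (G : SimpleGraph V)

lemma matching_finite {M : Set (Sym2 V)} (hM : IsMatchingSet G M) : M.Finite :=
  Set.Finite.subset (Set.toFinite G.edgeSet) hM.1

lemma matching_ncard_le {M : Set (Sym2 V)} (hM : IsMatchingSet G M) :
    M.ncard ≤ G.edgeSet.ncard :=
  Set.ncard_le_ncard hM.1 (Set.toFinite _)

lemma match_bddAbove :
    BddAbove {n | ∃ M : Set (Sym2 V), IsMatchingSet G M ∧ M.ncard = n} := by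
  refine ⟨G.edgeSet.ncard, ?_⟩
  rintro n ⟨M, hM, rfl⟩
  exact matching_ncard_le G hM

lemma indmatch_bddAbove :
    BddAbove {n | ∃ M : Set (Sym2 V), IsInducedMatchingSet G M ∧ M.ncard = n} := by
  refine ⟨G.edgeSet.ncard, ?_⟩
  rintro n ⟨M, hM, rfl⟩
  exact matching_ncard_le G hM.1

lemma empty_isMatchingSet : IsMatchingSet G (∅ : Set (Sym2 V)) := by
  constructor <;> simp

lemma le_matchNum {M : Set (Sym2 V)} (hM : IsMatchingSet G M) : M.ncard ≤ matchNum G :=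
  le_csSup (match_bddAbove G) ⟨M, hM, rfl⟩

lemma matchNum_le {k : ℕ} (h : ∀ M : Set (Sym2 V), IsMatchingSet G M → M.ncard ≤ k) :
    matchNum G ≤ k := by
  refine csSup_le ⟨0, ∅, empty_isMatchingSet G, by simp⟩ ?_
  rintro n ⟨M, hM, rfl⟩
  exact h M hM

lemma exists_max_matching :
    ∃ M : Set (Sym2 V), IsMatchingSet G M ∧ M.ncard = matchNum G := by
  have h := Nat.sSup_mem (s := {n | ∃ M : Set (Sym2 V), IsMatchingSet G M ∧ M.ncard = n})
    ⟨0, ∅, empty_isMatchingSet G, by simp⟩ (match_bddAbove G)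
  exact h

lemma le_indMatchNum {M : Set (Sym2 V)} (hM : IsInducedMatchingSet G M) :
    M.ncard ≤ indMatchNum G :=
  le_csSup (indmatch_bddAbove G) ⟨M, hM, rfl⟩

lemma two_mul_matching_le {M : Set (Sym2 V)} (hM : IsMatchingSet G M) :
    2 * M.ncard ≤ Fintype.card V := by
  classical
  haveI : Fintype M := (matching_finite G hM).fintype
  have hcard : M.ncard = Fintype.card M := by
    rw [← Nat.card_coe_set_eq, Nat.card_eq_fintype_card]
  have key : Fintype.card (M × Bool) ≤ Fintype.card V := by
    refine Fintype.card_le_of_injective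
      (fun p => if p.2 then p.1.1.out.1 else p.1.1.out.2) ?_
    rintro ⟨⟨e, he⟩, b⟩ ⟨⟨f, hf⟩, c⟩ hef
    have hmem : ∀ (z : Sym2 V) (d : Bool), (if d then z.out.1 else z.out.2) ∈ z := by
      intro z d
      cases d
      · simpa using Sym2.out_snd_mem z
      · simpa using Sym2.out_fst_mem z
    have hef2 : (if b = true then e.out.1 else e.out.2)
        = (if c = true then f.out.1 else f.out.2) := hef
    have h1 := hmem e b
    have h2 := hmem f c
    rw [hef2] at h1
    have hef' : e = f := by
      by_contra hne
      exact hM.2 e he f hf hne _ h1 h2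
    subst hef'
    simp only [Prod.mk.injEq, Subtype.mk.injEq]
    refine ⟨trivial, ?_⟩
    by_contra hbc
    have hd : e.out.1 = e.out.2 := by
      cases b <;> cases c <;> simp_all
    have : ¬ e.IsDiag := G.not_isDiag_of_mem_edgeSet (hM.1 e he)
    apply this
    rw [← e.out_eq]
    exact hd
  rw [Fintype.card_prod, Fintype.card_bool] at key
  rw [hcard]
  omega

lemma subset_isMatchingSet {M N : Set (Sym2 V)} (hM : IsMatchingSet G M) (h : N ⊆ M) :
    IsMatchingSet G N :=
  ⟨fun e he => hM.1 e (h he), fun e he f hf => hM.2 e (h he) f (h hf)⟩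

end General

section Lower
open scoped Classical

variable [Fintype V] (G : SimpleGraph V)

lemma connector_exists (hind : indMatchNum G = 1) {M : Set (Sym2 V)}
    (hM : IsMatchingSet G M) {e f : Sym2 V} (he : e ∈ M) (hf : f ∈ M) (hef : e ≠ f) :
    ∃ g ∈ G.edgeSet, g ∉ M ∧ (∃ v, v ∈ g ∧ v ∈ e) ∧ (∃ v, v ∈ g ∧ v ∈ f) := by
  have hsub : ({e, f} : Set (Sym2 V)) ⊆ M := by
    intro x hx
    rcases hx with rfl | rfl
    · exact he
    · exact hf
  have hpair : IsMatchingSet G {e, f} := subset_isMatchingSet G hM hsub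
  have hnotind : ¬ IsInducedMatchingSet G {e, f} := by
    intro hindm
    have h2 := le_indMatchNum G hindm
    rw [Set.ncard_pair hef, hind] at h2
    omega
  rw [IsInducedMatchingSet] at hnotind
  push_neg at hnotind
  obtain ⟨e', he', f', hf', hne', g, hg, hge', hgf'⟩ := hnotind hpair
  have hkey : (∃ v, v ∈ g ∧ v ∈ e) ∧ (∃ v, v ∈ g ∧ v ∈ f) := by
    rcases he' with rfl | rfl <;> rcases hf' with rfl | rfl
    · exact absurd rfl hne'
    · exact ⟨hge', hgf'⟩
    · exact ⟨hgf', hge'⟩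
    · exact absurd rfl hne'
  refine ⟨g, hg, ?_, hkey⟩
  intro hgM
  obtain ⟨⟨u, hug, hue⟩, ⟨w, hwg, hwf⟩⟩ := hkey
  by_cases hgE : g = e
  · subst hgE
    exact hM.2 g hgM f hf hef w hwg hwf
  · exact hM.2 g hgM e he hgE u hug hue

lemma meets_filter_card_le {M : Set (Sym2 V)} (hM : IsMatchingSet G M)
    (Mf : Finset (Sym2 V)) (hMfM : ∀ e ∈ Mf, e ∈ M) (g : Sym2 V) :
    (Mf.filter fun e => ∃ v, v ∈ g ∧ v ∈ e).card ≤ 2 := by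
  classical
  induction g using Sym2.ind with
  | _ x y =>
    have hle : (Mf.filter fun e => ∃ v, v ∈ s(x, y) ∧ v ∈ e).card
        ≤ ({x, y} : Finset V).card := by
      refine Finset.card_le_card_of_injOn (fun e => if x ∈ e then x else y) ?_ ?_
      · intro e _he
        by_cases hx : x ∈ e <;> simp [hx]
      · intro e he e' he' hee'
        simp only [Finset.mem_coe, Finset.mem_filter] at he he'
        obtain ⟨heMf, v, hvg, hve⟩ := he
        obtain ⟨he'Mf, w, hwg, hwe⟩ := he'
        have heM := hMfM e heMf
        have he'M := hMfM e' he'Mf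
        have hdisj : ∀ {a b : Sym2 V}, a ∈ M → b ∈ M → ∀ {u : V}, u ∈ a → u ∈ b → a = b := by
          intro a b ha hb u hua hub
          by_contra hab
          exact hM.2 a ha b hb hab u hua hub
        simp only at hee'
        by_cases hx : x ∈ e <;> by_cases hx' : x ∈ e'
        · exact hdisj heM he'M hx hx'
        · rw [if_pos hx, if_neg hx'] at hee'
          rw [Sym2.mem_iff] at hwg
          rcases hwg with rfl | rfl
          · exact absurd hwe hx'
          · rw [hee'] at hx
            exact hdisj heM he'M hx hwe
        · rw [if_neg hx, if_pos hx'] at hee'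
          rw [Sym2.mem_iff] at hvg
          rcases hvg with rfl | rfl
          · exact absurd hve hx
          · rw [← hee'] at hx'
            exact hdisj heM he'M hve hx'
        · rw [Sym2.mem_iff] at hvg hwg
          rcases hvg with rfl | rfl
          · exact absurd hve hx
          · rcases hwg with rfl | rfl
            · exact absurd hwe hx'
            · exact hdisj heM he'M hve hwe
    calc _ ≤ ({x, y} : Finset V).card := hle
    _ ≤ ({y} : Finset V).card + 1 := Finset.card_insert_le x {y}
    _ ≤ 2 := by simp

theorem lower_bound (q : ℕ) (hind : indMatchNum G = 1) (hmat : matchNum G = 2 * q) :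
    Nat.choose (2 * q + 1) 2 ≤ G.edgeSet.ncard := by
  classical
  rcases Nat.eq_zero_or_pos q with rfl | hq
  · simp
  obtain ⟨M, hM, hMcard⟩ := exists_max_matching G
  rw [hmat] at hMcard
  have hfin := matching_finite G hM
  set Mf : Finset (Sym2 V) := hfin.toFinset with hMfdef
  have hmemMf : ∀ e, e ∈ Mf ↔ e ∈ M := fun e => hfin.mem_toFinset
  have hMfcard : Mf.card = 2 * q := by
    rw [← hMcard, Set.ncard_eq_toFinset_card _ hfin]
  have hMsub : Mf ⊆ G.edgeFinset := by
    intro e he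
    rw [SimpleGraph.mem_edgeFinset]
    exact hM.1 e ((hmemMf e).1 he)
  -- nonempty Sym2 V
  have hMne : M.Nonempty := by
    rw [← Set.ncard_pos hfin, hMcard]; omega
  obtain ⟨e₀, he₀⟩ := hMne
  haveI : Nonempty (Sym2 V) := ⟨e₀⟩
  set P : Finset (Sym2 V) → Sym2 V → Prop :=
    fun S g => g ∈ G.edgeFinset \ Mf ∧ ∀ e ∈ S, ∃ v, v ∈ g ∧ v ∈ e with hPdef
  have hex : ∀ S ∈ Mf.powersetCard 2, ∃ g, P S g := by
    intro S hS
    rw [Finset.mem_powersetCard] at hS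
    obtain ⟨hSsub, hS2⟩ := hS
    obtain ⟨e, f, hef, rfl⟩ := Finset.card_eq_two.1 hS2
    have he : e ∈ M := (hmemMf e).1 (hSsub (by simp))
    have hf : f ∈ M := (hmemMf f).1 (hSsub (by simp))
    obtain ⟨g, hg, hgM, hge, hgf⟩ := connector_exists G hind hM he hf hef
    refine ⟨g, ?_, ?_⟩
    · rw [Finset.mem_sdiff, SimpleGraph.mem_edgeFinset]
      exact ⟨hg, fun h => hgM ((hmemMf g).1 h)⟩
    · intro x hx
      rcases Finset.mem_insert.1 hx with rfl | hx
      · exact hge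
      · rw [Finset.mem_singleton.1 hx]
        exact hgf
  set Φ : Finset (Sym2 V) → Sym2 V :=
    fun S => if h : ∃ g, P S g then h.choose else Classical.arbitrary _ with hΦdef
  have hΦspec : ∀ S ∈ Mf.powersetCard 2, P S (Φ S) := by
    intro S hS
    rw [hΦdef]
    simp only [dif_pos (hex S hS)]
    exact (hex S hS).choose_spec
  have key : (Mf.powersetCard 2).card ≤ (G.edgeFinset \ Mf).card := by
    refine Finset.card_le_card_of_injOn Φ (fun S hS => (hΦspec S hS).1) ?_
    intro S₁ hS₁ S₂ hS₂ hΦeq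
    simp only [Finset.mem_coe] at hS₁ hS₂
    have h₁ := hΦspec S₁ hS₁
    have h₂ := hΦspec S₂ hS₂
    rw [hΦeq] at h₁
    set g := Φ S₂
    set N : Finset (Sym2 V) := Mf.filter fun e => ∃ v, v ∈ g ∧ v ∈ e with hNdef
    have hNcard : N.card ≤ 2 := meets_filter_card_le G hM Mf (fun e he => (hmemMf e).1 he) g
    have hsub : ∀ S ∈ Mf.powersetCard 2, P S g → S = N := by
      intro S hS hPS
      have hSsub : S ⊆ N := by
        intro e he
        rw [hNdef, Finset.mem_filter]
        exact ⟨(Finset.mem_powersetCard.1 hS).1 he, hPS.2 e he⟩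
      have hS2 : S.card = 2 := (Finset.mem_powersetCard.1 hS).2
      exact Finset.eq_of_subset_of_card_le hSsub (by omega)
    rw [hsub S₁ hS₁ h₁, hsub S₂ hS₂ h₂]
  rw [Finset.card_powersetCard, hMfcard, Finset.card_sdiff_of_subset hMsub] at key
  have hle : Mf.card ≤ G.edgeFinset.card := Finset.card_le_card hMsub
  have hcount : G.edgeSet.ncard = G.edgeFinset.card := by
    rw [← Set.ncard_coe_finset, SimpleGraph.coe_edgeFinset]
  rw [hcount]
  have hch : Nat.choose (2 * q + 1) 2 = 2 * q + Nat.choose (2 * q) 2 := by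
    rw [Nat.choose_succ_succ (2 * q) 1, Nat.choose_one_right]
  omega

end Lower

section Construction
open scoped Classical

/-- The extremal graph: vertices `0..2q-1` form a clique, vertex `i+2q` is pendant to `i`. -/
def Gq (q : ℕ) : SimpleGraph (Fin (4 * q)) :=
  SimpleGraph.fromRel (fun i j => (i.val < 2 * q ∧ j.val < 2 * q) ∨ i.val + 2 * q = j.val)

lemma gq_adj {q : ℕ} {i j : Fin (4 * q)} :
    (Gq q).Adj i j ↔ i ≠ j ∧
      ((i.val < 2 * q ∧ j.val < 2 * q) ∨ i.val + 2 * q = j.val ∨ j.val + 2 * q = i.val) := by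
  simp only [Gq, SimpleGraph.fromRel_adj]
  tauto

lemma gq_mem_edge {q : ℕ} {z : Sym2 (Fin (4 * q))} (hz : z ∈ (Gq q).edgeSet)
    {v : Fin (4 * q)} (hv : v ∈ z) : ∃ u, (Gq q).Adj v u ∧ z = s(v, u) := by
  induction z using Sym2.ind with
  | _ x y =>
    rw [SimpleGraph.mem_edgeSet] at hz
    rw [Sym2.mem_iff] at hv
    rcases hv with rfl | rfl
    · exact ⟨y, hz, rfl⟩
    · exact ⟨x, hz.symm, Sym2.eq_swap⟩

/-- every edge contains a clique vertex -/
lemma gq_edge_has_a {q : ℕ} {z : Sym2 (Fin (4 * q))} (hz : z ∈ (Gq q).edgeSet) :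
    ∃ v, v ∈ z ∧ v.val < 2 * q := by
  induction z using Sym2.ind with
  | _ x y =>
    rw [SimpleGraph.mem_edgeSet, gq_adj] at hz
    have hx := x.isLt
    have hy := y.isLt
    rcases hz.2 with ⟨h1, _⟩ | h | h
    · exact ⟨x, by simp, h1⟩
    · exact ⟨x, by simp, by omega⟩
    · exact ⟨y, by simp, by omega⟩

/-- the only neighbour of a pendant vertex is its partner -/
lemma gq_pendant_nbr {q : ℕ} {v u : Fin (4 * q)} (hv : 2 * q ≤ v.val)
    (h : (Gq q).Adj v u) : u.val + 2 * q = v.val := by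
  rw [gq_adj] at h
  have hu := u.isLt
  have hvlt := v.isLt
  rcases h.2 with ⟨h1, _⟩ | h1 | h1 <;> omega

lemma gq_connected {q : ℕ} (hq : 1 ≤ q) : (Gq q).Connected := by
  have h0 : (0 : ℕ) < 4 * q := by omega
  have hreach : ∀ v : Fin (4 * q), (Gq q).Reachable v ⟨0, h0⟩ := by
    have ha : ∀ v : Fin (4 * q), v.val < 2 * q → (Gq q).Reachable v ⟨0, h0⟩ := by
      intro v hv
      by_cases h : v = ⟨0, h0⟩
      · rw [h]
      · exact SimpleGraph.Adj.reachable (by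
          rw [gq_adj]
          exact ⟨h, Or.inl ⟨hv, by simp; omega⟩⟩)
    intro v
    by_cases hv : v.val < 2 * q
    · exact ha v hv
    · have hv' : v.val - 2 * q < 2 * q := by have := v.isLt; omega
      set u : Fin (4 * q) := ⟨v.val - 2 * q, by omega⟩ with hu
      have hadj : (Gq q).Adj v u := by
        rw [gq_adj]
        refine ⟨?_, Or.inr (Or.inr (by simp [hu]; omega))⟩
        intro hvu
        rw [Fin.ext_iff] at hvu
        simp [hu] at hvu
        omega
      exact hadj.reachable.trans (ha u hv')
  haveI : Nonempty (Fin (4 * q)) := ⟨⟨0, h0⟩⟩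
  exact SimpleGraph.Connected.mk (fun u v => (hreach u).trans (hreach v).symm)

end Construction

section Invariants
open scoped Classical

def av {q : ℕ} (i : Fin (2 * q)) : Fin (4 * q) := ⟨i.val, by have := i.isLt; omega⟩
def bv {q : ℕ} (i : Fin (2 * q)) : Fin (4 * q) := ⟨i.val + 2 * q, by have := i.isLt; omega⟩

/-- the perfect matching -/
def M2 (q : ℕ) : Set (Sym2 (Fin (4 * q))) := Set.range fun i : Fin (2 * q) => s(av i, bv i)

lemma m2_isMatching (q : ℕ) : IsMatchingSet (Gq q) (M2 q) := by
  constructor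
  · rintro e ⟨i, rfl⟩
    rw [SimpleGraph.mem_edgeSet, gq_adj]
    refine ⟨?_, Or.inr (Or.inl rfl)⟩
    have := i.isLt
    simp [av, bv, Fin.ext_iff]
    omega
  · rintro e ⟨i, rfl⟩ f ⟨j, rfl⟩ hne v hv hvf
    have hij : i.val ≠ j.val := by
      intro h
      exact hne (by rw [Fin.ext_iff.2 h])
    rw [Sym2.mem_iff] at hv hvf
    have hi := i.isLt
    have hj := j.isLt
    simp only [av, bv, Fin.ext_iff] at hv hvf
    omega

lemma m2_ncard (q : ℕ) : (M2 q).ncard = 2 * q := by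
  have hinj : Function.Injective fun i : Fin (2 * q) => s(av i, bv i) := by
    intro i j h
    rw [Sym2.eq_iff] at h
    have hi := i.isLt
    have hj := j.isLt
    simp only [av, bv, Fin.ext_iff] at h
    apply Fin.ext
    omega
  rw [M2, ← Nat.card_coe_set_eq, Nat.card_range_of_injective hinj,
    Nat.card_eq_fintype_card, Fintype.card_fin]

lemma gq_matchNum (q : ℕ) : matchNum (Gq q) = 2 * q := by
  refine le_antisymm ?_ ?_
  · refine matchNum_le _ ?_
    intro M hM
    have h := two_mul_matching_le (Gq q) hM
    rw [Fintype.card_fin] at h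
    omega
  · have h := le_matchNum (Gq q) (m2_isMatching q)
    rwa [m2_ncard] at h

/-- the small maximal matching -/
def Mq (q : ℕ) : Set (Sym2 (Fin (4 * q))) :=
  Set.range fun k : Fin q =>
    s((⟨2 * k.val, by have := k.isLt; omega⟩ : Fin (4 * q)),
      ⟨2 * k.val + 1, by have := k.isLt; omega⟩)

lemma mq_isMatching (q : ℕ) : IsMatchingSet (Gq q) (Mq q) := by
  constructor
  · rintro e ⟨k, rfl⟩
    rw [SimpleGraph.mem_edgeSet, gq_adj]
    have hk := k.isLt
    refine ⟨?_, Or.inl ⟨by first | (simp; omega) | simp, by first | (simp; omega) | simp⟩⟩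
    simp [Fin.ext_iff]
  · rintro e ⟨i, rfl⟩ f ⟨j, rfl⟩ hne v hv hvf
    have hij : i.val ≠ j.val := by
      intro h
      exact hne (by rw [Fin.ext_iff.2 h])
    rw [Sym2.mem_iff] at hv hvf
    simp only [Fin.ext_iff] at hv hvf
    omega

lemma mq_ncard (q : ℕ) : (Mq q).ncard = q := by
  have hinj : Function.Injective fun k : Fin q =>
      s((⟨2 * k.val, by have := k.isLt; omega⟩ : Fin (4 * q)),
        ⟨2 * k.val + 1, by have := k.isLt; omega⟩) := by
    intro i j h
    rw [Sym2.eq_iff] at h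
    simp only [Fin.ext_iff] at h
    apply Fin.ext
    omega
  rw [Mq, ← Nat.card_coe_set_eq, Nat.card_range_of_injective hinj,
    Nat.card_eq_fintype_card, Fintype.card_fin]

lemma mq_isMaximal (q : ℕ) : IsMaximalMatchingSet (Gq q) (Mq q) := by
  refine ⟨mq_isMatching q, ?_⟩
  intro e he heM hins
  obtain ⟨w, hwe, hw⟩ := gq_edge_has_a he
  set k : ℕ := w.val / 2 with hk
  have hklt : k < q := by omega
  set f : Sym2 (Fin (4 * q)) :=
    s((⟨2 * k, by omega⟩ : Fin (4 * q)), ⟨2 * k + 1, by omega⟩) with hf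
  have hfMq : f ∈ Mq q := ⟨⟨k, hklt⟩, rfl⟩
  have hwf : w ∈ f := by
    rw [hf, Sym2.mem_iff]
    have : w.val = 2 * k ∨ w.val = 2 * k + 1 := by omega
    rcases this with h | h
    · exact Or.inl (Fin.ext h)
    · exact Or.inr (Fin.ext h)
  have hef : e ≠ f := by
    intro h
    rw [h] at heM
    exact heM hfMq
  exact hins.2 e (Set.mem_insert _ _) f (Set.mem_insert_of_mem _ hfMq) hef w hwe hwf

lemma sym2_filter_card_le {α : Type*} [Fintype α] [DecidableEq α] (z : Sym2 α) :
    (Finset.univ.filter fun v : α => v ∈ z).card ≤ 2 := by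
  induction z using Sym2.ind with
  | _ x y =>
    have hsub : (Finset.univ.filter fun v : α => v ∈ s(x, y)) ⊆ {x, y} := by
      intro v hv
      rw [Finset.mem_filter, Sym2.mem_iff] at hv
      rcases hv.2 with rfl | rfl <;> simp
    calc _ ≤ ({x, y} : Finset α).card := Finset.card_le_card hsub
    _ ≤ ({y} : Finset α).card + 1 := Finset.card_insert_le x {y}
    _ ≤ 2 := by simp

lemma gq_maximal_ge (q : ℕ) (hq : 1 ≤ q) {M : Set (Sym2 (Fin (4 * q)))}
    (hMmax : IsMaximalMatchingSet (Gq q) M) : q ≤ M.ncard := by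
  obtain ⟨hM, hmax⟩ := hMmax
  -- every clique vertex is covered
  have hcov : ∀ v : Fin (4 * q), v.val < 2 * q → ∃ e ∈ M, v ∈ e := by
    intro v hv
    by_contra hnc
    push_neg at hnc
    set b : Fin (4 * q) := ⟨v.val + 2 * q, by omega⟩ with hb
    by_cases hbcov : ∃ f ∈ M, b ∈ f
    · obtain ⟨f, hfM, hbf⟩ := hbcov
      obtain ⟨u, hadj, hfeq⟩ := gq_mem_edge (hM.1 f hfM) hbf
      have hu := gq_pendant_nbr (by simp [hb]) hadj
      have huv : u = v := by
        apply Fin.ext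
        simp [hb] at hu
        omega
      apply hnc f hfM
      rw [hfeq, huv]
      exact Sym2.mem_mk_right _ _
    · push_neg at hbcov
      set e0 : Sym2 (Fin (4 * q)) := s(v, b) with he0
      have he0E : e0 ∈ (Gq q).edgeSet := by
        rw [he0, SimpleGraph.mem_edgeSet, gq_adj]
        refine ⟨?_, Or.inr (Or.inl rfl)⟩
        simp [hb, Fin.ext_iff]
        omega
      have he0M : e0 ∉ M := by
        intro h
        exact hnc e0 h (Sym2.mem_mk_left _ _)
      apply hmax e0 he0E he0M
      constructor
      · rintro e (rfl | he)
        · exact he0E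
        · exact hM.1 e he
      · rintro e (rfl | he) f (rfl | hf) hef u hu huf
        · exact hef rfl
        · rw [he0, Sym2.mem_iff] at hu
          rcases hu with rfl | rfl
          · exact hnc f hf huf
          · exact hbcov f hf huf
        · rw [he0, Sym2.mem_iff] at huf
          rcases huf with rfl | rfl
          · exact hnc e he hu
          · exact hbcov e he hu
        · exact hM.2 e he f hf hef u hu huf
  -- counting
  have hfin : M.Finite := matching_finite _ hM
  haveI : Nonempty (Sym2 (Fin (4 * q))) := ⟨s(⟨0, by omega⟩, ⟨0, by omega⟩)⟩
  set A : Finset (Fin (4 * q)) := Finset.univ.filter (fun v => v.val < 2 * q) with hA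
  have hAcard : A.card = 2 * q := by
    have : A = Finset.image (av (q := q)) Finset.univ := by
      ext v
      simp only [hA, Finset.mem_filter, Finset.mem_univ, true_and, Finset.mem_image]
      constructor
      · intro hv
        exact ⟨⟨v.val, hv⟩, by simp [av]⟩
      · rintro ⟨i, rfl⟩
        have := i.isLt
        simpa [av] using this
    rw [this, Finset.card_image_of_injective _ (fun i j h => by
      apply Fin.ext; simpa [av, Fin.ext_iff] using h), Finset.card_univ, Fintype.card_fin]
  set F : Fin (4 * q) → Sym2 (Fin (4 * q)) :=
    fun v => if h : ∃ e ∈ M, v ∈ e then h.choose else Classical.arbitrary _ with hF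
  have hFspec : ∀ v ∈ A, F v ∈ M ∧ v ∈ F v := by
    intro v hv
    rw [hA, Finset.mem_filter] at hv
    have h := hcov v hv.2
    rw [hF]
    simp only [dif_pos h]
    exact ⟨h.choose_spec.1, h.choose_spec.2⟩
  have hcard1 : A.card ≤ 2 * (A.image F).card := by
    refine Finset.card_le_mul_card_image A 2 ?_
    intro a _ha
    have hsub : (A.filter fun v => F v = a) ⊆ Finset.univ.filter (fun v => v ∈ a) := by
      intro v hv
      rw [Finset.mem_filter] at hv
      obtain ⟨hvA, hvF⟩ := hv
      rw [Finset.mem_filter]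
      exact ⟨Finset.mem_univ _, hvF ▸ (hFspec v hvA).2⟩
    exact le_trans (Finset.card_le_card hsub) (sym2_filter_card_le a)
  have hcard2 : (A.image F).card ≤ M.ncard := by
    rw [Set.ncard_eq_toFinset_card _ hfin]
    refine Finset.card_le_card ?_
    intro e he
    obtain ⟨v, hv, rfl⟩ := Finset.mem_image.1 he
    rw [Set.Finite.mem_toFinset]
    exact (hFspec v hv).1
  omega

lemma gq_minMatchNum (q : ℕ) (hq : 1 ≤ q) : minMatchNum (Gq q) = q := by
  refine le_antisymm ?_ ?_
  · exact Nat.sInf_le ⟨Mq q, mq_isMaximal q, mq_ncard q⟩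
  · refine le_csInf ⟨q, Mq q, mq_isMaximal q, mq_ncard q⟩ ?_
    rintro n ⟨M, hMmax, rfl⟩
    exact gq_maximal_ge q hq hMmax

lemma gq_indMatchNum (q : ℕ) (hq : 1 ≤ q) : indMatchNum (Gq q) = 1 := by
  have h2q : 1 < 2 * q := by omega
  set x : Fin (4 * q) := ⟨0, by omega⟩ with hx
  set y : Fin (4 * q) := ⟨1, by omega⟩ with hy
  have hedge : s(x, y) ∈ (Gq q).edgeSet := by
    rw [SimpleGraph.mem_edgeSet, gq_adj]
    exact ⟨by simp [hx, hy, Fin.ext_iff], Or.inl ⟨by simp [hx]; omega, by simp [hy]; omega⟩⟩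
  refine le_antisymm ?_ ?_
  · refine csSup_le ⟨0, ∅, ⟨empty_isMatchingSet _, by simp⟩, by simp⟩ ?_
    rintro n ⟨M, hMind, rfl⟩
    by_contra hgt
    push_neg at hgt
    have hfin : M.Finite := matching_finite _ hMind.1
    obtain ⟨e, f, he, hf, hef⟩ := (Set.one_lt_ncard_iff hfin).1 hgt
    obtain ⟨u, hue, hu⟩ := gq_edge_has_a (hMind.1.1 e he)
    obtain ⟨w, hwf, hw⟩ := gq_edge_has_a (hMind.1.1 f hf)
    have huw : u ≠ w := by
      intro h
      exact hMind.1.2 e he f hf hef u hue (h ▸ hwf)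
    have hg : s(u, w) ∈ (Gq q).edgeSet := by
      rw [SimpleGraph.mem_edgeSet, gq_adj]
      exact ⟨huw, Or.inl ⟨hu, hw⟩⟩
    exact hMind.2 e he f hf hef s(u, w) hg
      ⟨⟨u, Sym2.mem_mk_left _ _, hue⟩, ⟨w, Sym2.mem_mk_right _ _, hwf⟩⟩
  · have h1 : IsInducedMatchingSet (Gq q) {s(x, y)} := by
      refine ⟨⟨?_, ?_⟩, ?_⟩
      · rintro e rfl
        exact hedge
      · rintro e rfl f rfl hef
        exact absurd rfl hef
      · rintro e rfl f rfl hef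
        exact absurd rfl hef
    have := le_indMatchNum (Gq q) h1
    rwa [Set.ncard_singleton] at this
end Invariants

section EdgeCount

def fe (q : ℕ) : Sym2 (Fin (2 * q)) → Sym2 (Fin (4 * q)) :=
  Sym2.lift ⟨fun i j => if i = j then s(av i, bv i) else s(av i, av j), by
    intro i j
    show (if i = j then s(av i, bv i) else s(av i, av j))
      = (if j = i then s(av j, bv j) else s(av j, av i))
    by_cases h : i = j
    · subst h; simp
    · rw [if_neg h, if_neg (Ne.symm h)]
      exact Sym2.eq_swap⟩

lemma fe_mk (q : ℕ) (i j : Fin (2 * q)) :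
    fe q s(i, j) = if i = j then s(av i, bv i) else s(av i, av j) :=
  Sym2.lift_mk _ i j

lemma fe_range (q : ℕ) : Set.range (fe q) = (Gq q).edgeSet := by
  ext z
  constructor
  · rintro ⟨w, rfl⟩
    induction w using Sym2.ind with
    | _ i j =>
      rw [fe_mk]
      by_cases h : i = j
      · rw [if_pos h]
        rw [SimpleGraph.mem_edgeSet, gq_adj]
        have := i.isLt
        refine ⟨?_, Or.inr (Or.inl rfl)⟩
        simp [av, bv, Fin.ext_iff]
        omega
      · rw [if_neg h]
        rw [SimpleGraph.mem_edgeSet, gq_adj]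
        have hi := i.isLt
        have hj := j.isLt
        refine ⟨?_, Or.inl ⟨by simp [av], by simp [av]⟩⟩
        intro hc
        exact h (Fin.ext (by simpa [av, Fin.ext_iff] using hc))
  · intro hz
    induction z using Sym2.ind with
    | _ u v =>
      rw [SimpleGraph.mem_edgeSet, gq_adj] at hz
      obtain ⟨hne, hcase⟩ := hz
      have hu := u.isLt
      have hv := v.isLt
      rcases hcase with ⟨h1, h2⟩ | h | h
      · refine ⟨s(⟨u.val, h1⟩, ⟨v.val, h2⟩), ?_⟩
        rw [fe_mk, if_neg (by
          intro hc
          exact hne (Fin.ext (by simpa [Fin.ext_iff] using hc)))]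
        exact congrArg (fun p : Fin (4 * q) × Fin (4 * q) => s(p.1, p.2)) (a₁ := (av ⟨u.val, h1⟩, av ⟨v.val, h2⟩)) (a₂ := (u, v)) (Prod.ext (Fin.ext (by simp [av])) (Fin.ext (by simp [av])))
      · have h1 : u.val < 2 * q := by omega
        refine ⟨s(⟨u.val, h1⟩, ⟨u.val, h1⟩), ?_⟩
        rw [fe_mk, if_pos rfl]
        exact congrArg (fun p : Fin (4 * q) × Fin (4 * q) => s(p.1, p.2)) (a₁ := (av ⟨u.val, h1⟩, bv ⟨u.val, h1⟩)) (a₂ := (u, v)) (Prod.ext (Fin.ext (by simp [av]))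
          (Fin.ext (by simp [bv]; omega)))
      · have h1 : v.val < 2 * q := by omega
        refine ⟨s(⟨v.val, h1⟩, ⟨v.val, h1⟩), ?_⟩
        rw [fe_mk, if_pos rfl, Sym2.eq_swap (a := u)]
        exact congrArg (fun p : Fin (4 * q) × Fin (4 * q) => s(p.1, p.2)) (a₁ := (av ⟨v.val, h1⟩, bv ⟨v.val, h1⟩)) (a₂ := (v, u)) (Prod.ext (Fin.ext (by simp [av]))
          (Fin.ext (by simp [bv]; omega)))

lemma fe_injective (q : ℕ) : Function.Injective (fe q) := by
  intro z w
  induction z using Sym2.ind with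
  | _ i j =>
    induction w using Sym2.ind with
    | _ k l =>
      intro h
      rw [fe_mk, fe_mk] at h
      have hi := i.isLt
      have hj := j.isLt
      have hk := k.isLt
      have hl := l.isLt
      by_cases hij : i = j <;> by_cases hkl : k = l
      · rw [if_pos hij, if_pos hkl, Sym2.eq_iff] at h
        simp only [av, bv, Fin.ext_iff] at h
        rw [Sym2.eq_iff]
        simp only [Fin.ext_iff]
        omega
      · rw [if_pos hij, if_neg hkl, Sym2.eq_iff] at h
        simp only [av, bv, Fin.ext_iff] at h
        omega
      · rw [if_neg hij, if_pos hkl, Sym2.eq_iff] at h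
        simp only [av, bv, Fin.ext_iff] at h
        omega
      · rw [if_neg hij, if_neg hkl, Sym2.eq_iff] at h
        simp only [av, Fin.ext_iff] at h
        rw [Sym2.eq_iff]
        simp only [Fin.ext_iff]
        omega

lemma gq_edgeCount (q : ℕ) : (Gq q).edgeSet.ncard = Nat.choose (2 * q + 1) 2 := by
  rw [← fe_range, ← Nat.card_coe_set_eq, Nat.card_range_of_injective (fe_injective q),
    Nat.card_eq_fintype_card, Sym2.card, Fintype.card_fin]

end EdgeCount

theorem stmt_6 (q : ℕ) (hq : 1 ≤ q) :
    (∀ (V : Type) [Fintype V] (G : SimpleGraph V), G.Connected →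
      indMatchNum G = 1 → minMatchNum G = q → matchNum G = 2 * q →
      Nat.choose (2 * q + 1) 2 ≤ G.edgeSet.ncard) ∧
    (∃ (n : ℕ) (G : SimpleGraph (Fin n)), G.Connected ∧
      indMatchNum G = 1 ∧ minMatchNum G = q ∧ matchNum G = 2 * q ∧
      G.edgeSet.ncard = Nat.choose (2 * q + 1) 2) := by
  constructor
  · intro V _ G _ hind _ hmat
    exact lower_bound G q hind hmat
  · exact ⟨4 * q, Gq q, gq_connected hq, gq_indMatchNum q hq, gq_minMatchNum q hq,
      gq_matchNum q, gq_edgeCount q⟩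
end
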